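/- arXiv:1008.4507 — 5 statements merged into one kernel-verified Lean document; each statement's English description precedes it below -/
import Mathlib

section
/- Let φ₁, φ₂ : ℝ → ℝ be positive, bounded and uniformly continuous, and let (u₁, u₂) be a classical solution of the Lotka–Volterra cooperative system with initial data (φ₁, φ₂) taking nonnegative values. Define E₁ = max{sup_x φ₁(x), k₁, (k₁/k₂)·sup_x φ₂(x)} and E₂ = max{sup_x φ₂(x), k₂, (k₂/k₁)·sup_x φ₁(x)}. Then for all t > 0 and x ∈ ℝ one has 0 < u₁(t,x) ≤ E₁ and 0 < u₂(t,x) ≤ E₂. -/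
open Real Set Filter Topology MeasureTheory

/-- Partial derivative in time of a function `u : ℝ → ℝ → ℝ` (time, then space). -/
noncomputable def pdT (u : ℝ → ℝ → ℝ) (t x : ℝ) : ℝ := deriv (fun s => u s x) t

/-- Second partial derivative in space of a function `u : ℝ → ℝ → ℝ`. -/
noncomputable def pdXX (u : ℝ → ℝ → ℝ) (t x : ℝ) : ℝ := deriv (deriv (u t)) x

/-- A function `u : [0,∞) × ℝ → ℝ` (encoded as a total function) which is bounded and
uniformly continuous on `[0,∞) × ℝ`, continuously differentiable in `t` and twice
continuously differentiable in `x` on `(0,∞) × ℝ`. -/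
structure RegularFn (u : ℝ → ℝ → ℝ) : Prop where
  bounded : ∃ M : ℝ, ∀ t x : ℝ, 0 ≤ t → |u t x| ≤ M
  unifCont : UniformContinuousOn (fun p : ℝ × ℝ => u p.1 p.2) (Ici 0 ×ˢ (univ : Set ℝ))
  contT : ∀ x : ℝ, ContDiffOn ℝ 1 (fun s => u s x) (Ioi 0)
  contX : ∀ t : ℝ, 0 < t → ContDiff ℝ 2 (u t)

/-- `(u₁, u₂)` is a classical solution of the Lotka–Volterra cooperative system
`∂u₁/∂t = d₁ ∂²u₁/∂x² + r₁u₁(1 − u₁ + b₁u₂)`,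
`∂u₂/∂t = d₂ ∂²u₂/∂x² + r₂u₂(1 − u₂ + b₂u₁)`
with initial data `(φ₁, φ₂)`. -/
structure IsLVSolution (d₁ d₂ r₁ r₂ b₁ b₂ : ℝ) (φ₁ φ₂ : ℝ → ℝ) (u₁ u₂ : ℝ → ℝ → ℝ) : Prop where
  reg1 : RegularFn u₁
  reg2 : RegularFn u₂
  pde1 : ∀ t x : ℝ, 0 < t →
    pdT u₁ t x = d₁ * pdXX u₁ t x + r₁ * u₁ t x * (1 - u₁ t x + b₁ * u₂ t x)
  pde2 : ∀ t x : ℝ, 0 < t →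
    pdT u₂ t x = d₂ * pdXX u₂ t x + r₂ * u₂ t x * (1 - u₂ t x + b₂ * u₁ t x)
  init1 : ∀ x : ℝ, u₁ 0 x = φ₁ x
  init2 : ∀ x : ℝ, u₂ 0 x = φ₂ x

lemma E_ineq (b₁ b₂ S₁ S₂ : ℝ) (hb₁ : 0 < b₁) (hb₂ : 0 < b₂) (hbb : b₁*b₂ < 1)
    (hS₁ : 0 < S₁) (hS₂ : 0 < S₂) :
    1 + b₁ * (max (max S₂ ((1+b₂)/(1-b₁*b₂))) (((1+b₂)/(1-b₁*b₂))/((1+b₁)/(1-b₁*b₂))*S₁))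
      ≤ max (max S₁ ((1+b₁)/(1-b₁*b₂))) (((1+b₁)/(1-b₁*b₂))/((1+b₂)/(1-b₁*b₂))*S₂) := by
  have hd : (0:ℝ) < 1 - b₁*b₂ := by linarith
  set k₁ := (1+b₁)/(1-b₁*b₂) with hk₁def
  set k₂ := (1+b₂)/(1-b₁*b₂) with hk₂def
  have hk₁ : 0 < k₁ := div_pos (by linarith) hd
  have hk₂ : 0 < k₂ := div_pos (by linarith) hd
  set E₁ := max (max S₁ k₁) (k₁/k₂*S₂) with hE₁def
  set E₂ := max (max S₂ k₂) (k₂/k₁*S₁) with hE₂def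
  have hE₁k : k₁ ≤ E₁ := le_max_of_le_left (le_max_right _ _)
  have hEq : E₂ * k₁ = E₁ * k₂ := by
    rw [hE₁def, hE₂def, max_mul_of_nonneg _ _ hk₁.le, max_mul_of_nonneg _ _ hk₁.le,
        max_mul_of_nonneg _ _ hk₂.le, max_mul_of_nonneg _ _ hk₂.le]
    have e1 : k₂/k₁*S₁*k₁ = S₁*k₂ := by field_simp
    have e2 : k₁/k₂*S₂*k₂ = S₂*k₁ := by field_simp
    rw [e1, e2]
    simp [max_comm, max_assoc, max_left_comm, mul_comm]
  have hkb : k₁ - b₁*k₂ = 1 := by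
    rw [hk₁def, hk₂def]; field_simp; ring
  have key : (1 + b₁ * E₂) * k₁ ≤ E₁ * k₁ := by nlinarith
  exact le_of_mul_le_mul_right key hk₁


lemma deriv_nonpos_of_left_min {g : ℝ → ℝ} {g' s : ℝ} (hg : HasDerivAt g g' s)
    (h : ∀ᶠ t in 𝓝[<] s, g s ≤ g t) : g' ≤ 0 := by
  have hslope : Tendsto (slope g s) (𝓝[<] s) (𝓝 g') :=
    (hasDerivAt_iff_tendsto_slope.mp hg).mono_left
      (nhdsWithin_mono s (fun t ht => ne_of_lt ht))
  refine le_of_tendsto hslope ?_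
  filter_upwards [h, self_mem_nhdsWithin] with t ht hts
  rw [slope_def_field]
  have hts' : t < s := hts
  exact div_nonpos_of_nonneg_of_nonpos (by linarith) (by linarith)

lemma deriv_nonneg_of_left_max {g : ℝ → ℝ} {g' s : ℝ} (hg : HasDerivAt g g' s)
    (h : ∀ᶠ t in 𝓝[<] s, g t ≤ g s) : 0 ≤ g' := by
  have := deriv_nonpos_of_left_min (hg.neg) (by filter_upwards [h] with t ht; simpa using ht)
  linarith

lemma second_deriv_nonneg_of_isLocalMin {f : ℝ → ℝ} (hf : ContDiff ℝ 2 f) {a : ℝ}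
    (h : IsLocalMin f a) : 0 ≤ deriv (deriv f) a := by
  by_contra hneg
  push_neg at hneg
  have hdiff : Differentiable ℝ f ∧ ContDiff ℝ 1 (deriv f) := by
    have h2 : ContDiff ℝ ((1 : WithTop ℕ∞) + 1) f := by norm_num; exact hf
    have := contDiff_succ_iff_deriv.mp h2
    exact ⟨this.1, this.2.2⟩
  have hd1 : deriv f a = 0 := h.deriv_eq_zero
  have hd' : HasDerivAt (deriv f) (deriv (deriv f) a) a :=
    ((hdiff.2.differentiable one_ne_zero) a).hasDerivAt
  have hslope : Tendsto (slope (deriv f) a) (𝓝[>] a) (𝓝 (deriv (deriv f) a)) :=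
    (hasDerivAt_iff_tendsto_slope.mp hd').mono_left
      (nhdsWithin_mono a (fun t ht => ne_of_gt ht))
  have hev : ∀ᶠ x in 𝓝[>] a, slope (deriv f) a x < 0 :=
    hslope.eventually_lt_const hneg
  have hev2 : ∀ᶠ x in 𝓝[>] a, deriv f x < 0 := by
    filter_upwards [hev, self_mem_nhdsWithin] with x hx hxa
    have hxa' : a < x := hxa
    rw [slope_def_field, hd1, sub_zero] at hx
    have := mul_neg_of_neg_of_pos hx (by linarith : (0:ℝ) < x - a)
    rw [div_mul_cancel₀] at this
    · linarith
    · linarith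
  have hev3 : ∀ᶠ x in 𝓝[>] a, f a ≤ f x := h.filter_mono nhdsWithin_le_nhds
  obtain ⟨u, hu, hsub⟩ := mem_nhdsGT_iff_exists_Ioo_subset.mp (hev2.and hev3)
  set b := (a + u) / 2 with hb
  have hab : a < b := by simp only [hb]; simp at hu; linarith
  have hbu : b < u := by simp only [hb]; simp at hu; linarith
  have hanti : StrictAntiOn f (Icc a b) := by
    apply strictAntiOn_of_deriv_neg (convex_Icc a b) (hf.continuous.continuousOn)
    intro x hx
    rw [interior_Icc] at hx
    exact (hsub ⟨hx.1, hx.2.trans hbu⟩).1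
  have hlt : f b < f a := hanti (left_mem_Icc.mpr hab.le) (right_mem_Icc.mpr hab.le) hab
  have hge : f a ≤ f b := (hsub ⟨hab, hbu⟩).2
  linarith

lemma second_deriv_nonpos_of_isLocalMax {f : ℝ → ℝ} (hf : ContDiff ℝ 2 f) {a : ℝ}
    (h : IsLocalMax f a) : deriv (deriv f) a ≤ 0 := by
  have h1 : 0 ≤ deriv (deriv (fun x => -f x)) a :=
    second_deriv_nonneg_of_isLocalMin hf.neg h.neg
  have h2 : deriv (fun x => -f x) = fun x => -deriv f x := by
    funext x; exact deriv.neg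
  rw [h2] at h1
  have h3 : deriv (fun x => -deriv f x) a = -deriv (deriv f) a := deriv.neg
  rw [h3] at h1
  linarith

set_option maxHeartbeats 1000000 in
lemma upper_core
    (u v : ℝ → ℝ → ℝ) (d r b Eu Ev ε δ t₀ RR s y K : ℝ)
    (hContT : ∀ x : ℝ, ContDiffOn ℝ 1 (fun s => u s x) (Ioi 0))
    (hContX : ∀ t : ℝ, 0 < t → ContDiff ℝ 2 (u t))
    (hpde : pdT u s y = d * pdXX u s y + r * u s y * (1 - u s y + b * v s y))
    (hd : 0 < d) (hr : 0 < r) (hb : 0 < b) (hEu : 0 < Eu) (hEv : 0 < Ev)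
    (hE : 1 + b * Ev ≤ Eu)
    (hε : 0 < ε) (hδ : 0 < δ) (hδd : 2*d*δ < 1)
    (hs : 0 < s) (hst : s ≤ t₀) (hy : y ∈ Ioo (-RR) RR)
    (hmax : ∀ t x : ℝ, t ∈ Icc 0 t₀ → x ∈ Icc (-RR) RR →
       u t x / Eu - ε * Real.exp t * (1 + δ * x^2) ≤ K)
    (huK : u s y / Eu - ε * Real.exp s * (1 + δ * y^2) = K)
    (hvle : v s y / Ev - ε * Real.exp s * (1 + δ * y^2) ≤ K)
    (hv0 : 0 ≤ v s y) (hK : 1 < K) : False := by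
  have hexp : 0 < Real.exp s := Real.exp_pos s
  -- time derivative inequality
  have hdt : DifferentiableAt ℝ (fun t => u t y) s :=
    ((hContT y).differentiableOn one_ne_zero).differentiableAt (Ioi_mem_nhds hs)
  have hgt : HasDerivAt (fun t => u t y / Eu - ε * Real.exp t * (1 + δ * y^2))
      (pdT u s y / Eu - ε * Real.exp s * (1 + δ * y^2)) s :=
    (hdt.hasDerivAt.div_const Eu).sub
      (((Real.hasDerivAt_exp s).const_mul ε).mul_const (1 + δ * y^2))
  have h1 : 0 ≤ pdT u s y / Eu - ε * Real.exp s * (1 + δ * y^2) := by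
    refine deriv_nonneg_of_left_max hgt ?_
    have hIoo : Ioo 0 s ∈ 𝓝[<] s := Ioo_mem_nhdsLT_of_mem ⟨hs, le_rfl⟩
    filter_upwards [hIoo] with t ht
    rw [huK]
    exact hmax t y ⟨ht.1.le, ht.2.le.trans hst⟩ ⟨hy.1.le, hy.2.le⟩
  -- space second derivative inequality
  have hux : ContDiff ℝ 2 (u s) := hContX s hs
  have huxd : Differentiable ℝ (u s) := hux.differentiable (by norm_num)
  have hux' : ContDiff ℝ 1 (deriv (u s)) := by
    have h2 : ContDiff ℝ ((1 : WithTop ℕ∞) + 1) (u s) := by norm_num; exact hux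
    exact (contDiff_succ_iff_deriv.mp h2).2.2
  set h : ℝ → ℝ := fun x => u s x / Eu - ε * Real.exp s * (1 + δ * x^2) with hhdef
  have hpoly : ContDiff ℝ 2 (fun x : ℝ => ε * Real.exp s * (1 + δ * x^2)) :=
    contDiff_const.mul (contDiff_const.add (contDiff_const.mul (contDiff_id.pow 2)))
  have hh : ContDiff ℝ 2 h := (hux.div_const Eu).sub hpoly
  have hlm : IsLocalMax h y := by
    have hmem : Icc (-RR) RR ∈ 𝓝 y := Icc_mem_nhds hy.1 hy.2
    filter_upwards [hmem] with x hx
    show h x ≤ h y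
    rw [hhdef]; simp only
    rw [huK]
    exact hmax s x ⟨hs.le, hst⟩ hx
  have h2 : deriv (deriv h) y ≤ 0 := second_deriv_nonpos_of_isLocalMax hh hlm
  have hderiv_h : deriv h = fun x => deriv (u s) x / Eu - ε * Real.exp s * (δ * (2 * x)) := by
    funext x
    have hq : HasDerivAt (fun x : ℝ => ε * Real.exp s * (1 + δ * x^2))
        (ε * Real.exp s * (δ * (2 * x))) x := by
      have hp : HasDerivAt (fun x : ℝ => x^2) (2 * x) x := by
        simpa using hasDerivAt_pow 2 x
      exact ((hp.const_mul δ).const_add 1).const_mul (ε * Real.exp s)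
    exact (((huxd x).hasDerivAt.div_const Eu).sub hq).deriv
  have hdd : deriv (deriv h) y = pdXX u s y / Eu - ε * Real.exp s * (δ * 2) := by
    rw [hderiv_h]
    have hq2 : HasDerivAt (fun x : ℝ => ε * Real.exp s * (δ * (2 * x)))
        (ε * Real.exp s * (δ * (2 * 1))) y := by
      have : HasDerivAt (fun x : ℝ => 2 * x) (2 * 1) y := (hasDerivAt_id y).const_mul 2
      exact (this.const_mul δ).const_mul (ε * Real.exp s)
    have hd2 : HasDerivAt (fun x => deriv (u s) x / Eu)
        (deriv (deriv (u s)) y / Eu) y :=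
      ((hux'.differentiable one_ne_zero y).hasDerivAt.div_const Eu)
    have : deriv (fun x => deriv (u s) x / Eu - ε * Real.exp s * (δ * (2 * x))) y
        = deriv (deriv (u s)) y / Eu - ε * Real.exp s * (δ * (2 * 1)) := (hd2.sub hq2).deriv
    rw [this]
    unfold pdXX
    ring
  rw [hdd] at h2
  -- nonlinearity
  have hB : 0 < ε * Real.exp s * (1 + δ * y^2) := by positivity
  have huval : u s y = Eu * (K + ε * Real.exp s * (1 + δ * y^2)) := by
    field_simp at huK ⊢
    linarith
  have hvval : v s y ≤ Ev * (K + ε * Real.exp s * (1 + δ * y^2)) := by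
    rw [div_sub' (ne_of_gt hEv)] at hvle
    rw [div_le_iff₀ hEv] at hvle
    nlinarith
  have hKB : 1 < K + ε * Real.exp s * (1 + δ * y^2) := by linarith
  have hterm : r * u s y * (1 - u s y + b * v s y) ≤ 0 := by
    have hfac : 1 - u s y + b * v s y ≤ 0 := by nlinarith
    have hu0 : 0 ≤ u s y := by nlinarith
    have : 0 ≤ r * u s y := by positivity
    exact mul_nonpos_of_nonneg_of_nonpos this hfac
  -- combine
  have hP : ε * Real.exp s * (1 + δ * y ^ 2) * Eu ≤ pdT u s y :=
    (le_div_iff₀ hEu).mp (by linarith)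
  have hQ : pdXX u s y ≤ ε * Real.exp s * (δ * 2) * Eu :=
    (div_le_iff₀ hEu).mp (by linarith)
  have h3 : d * pdXX u s y ≤ d * (ε * Real.exp s * (δ * 2) * Eu) :=
    mul_le_mul_of_nonneg_left hQ hd.le
  have hchain : ε * Real.exp s * (1 + δ * y ^ 2) * Eu ≤ d * (ε * Real.exp s * (δ * 2) * Eu) := by
    linarith [hpde ▸ hP]
  have hc : 0 < ε * Real.exp s * Eu := by positivity
  have hchain' : (1 + δ * y ^ 2) * (ε * Real.exp s * Eu) ≤ (d * (δ * 2)) * (ε * Real.exp s * Eu) := by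
    ring_nf
    ring_nf at hchain
    linarith
  have hcancel : 1 + δ * y ^ 2 ≤ d * (δ * 2) := le_of_mul_le_mul_right hchain' hc
  nlinarith [sq_nonneg y, mul_nonneg hδ.le (sq_nonneg y)]

set_option maxHeartbeats 1000000 in
lemma pos_core
    (u v : ℝ → ℝ → ℝ) (d r b M t₀ x₀ : ℝ) (φ : ℝ → ℝ)
    (hContT : ∀ x : ℝ, ContDiffOn ℝ 1 (fun s => u s x) (Ioi 0))
    (hContX : ∀ t : ℝ, 0 < t → ContDiff ℝ 2 (u t))
    (hpde : ∀ t x : ℝ, 0 < t →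
      pdT u t x = d * pdXX u t x + r * u t x * (1 - u t x + b * v t x))
    (hcont : ContinuousOn (fun p : ℝ × ℝ => u p.1 p.2) (Ici 0 ×ˢ (univ : Set ℝ)))
    (hinit : ∀ x, u 0 x = φ x)
    (hφpos : ∀ x, 0 < φ x) (hφcont : Continuous φ)
    (hd : 0 < d) (hr : 0 < r) (hb : 0 < b)
    (hM : ∀ t x : ℝ, 0 ≤ t → u t x ≤ M)
    (hu0 : ∀ t x : ℝ, 0 ≤ t → 0 ≤ u t x)
    (hv0 : ∀ t x : ℝ, 0 ≤ t → 0 ≤ v t x)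
    (ht₀ : 0 < t₀) : 0 < u t₀ x₀ := by
  have hM0 : 0 ≤ M := le_trans (hu0 0 x₀ le_rfl) (hM 0 x₀ le_rfl)
  obtain ⟨xm, hxm, hminφ⟩ := isCompact_Icc.exists_isMinOn
    (Set.nonempty_Icc.mpr (by linarith)) (hφcont.continuousOn (s := Icc (x₀-1) (x₀+1)))
  set m := φ xm with hmdef
  have hm : 0 < m := hφpos xm
  have hmle : ∀ x ∈ Icc (x₀-1) (x₀+1), m ≤ φ x := fun x hx => hminφ hx
  set c : ℝ := π / 2 with hcdef
  have hc : 0 < c := by positivity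
  set lam : ℝ := d * c^2 + r * (1 + M) + 1 with hlamdef
  set ψ : ℝ → ℝ → ℝ := fun t x => m * Real.exp (-(lam * t)) * Real.cos (c * (x - x₀))
    with hψdef
  set Q : Set (ℝ × ℝ) := Icc 0 t₀ ×ˢ Icc (x₀-1) (x₀+1) with hQdef
  have hQcompact : IsCompact Q := isCompact_Icc.prod isCompact_Icc
  have hQne : Q.Nonempty := ⟨(t₀, x₀), ⟨⟨ht₀.le, le_rfl⟩, ⟨by linarith, by linarith⟩⟩⟩
  have hQsub : Q ⊆ Ici 0 ×ˢ (univ : Set ℝ) := fun p hp => ⟨hp.1.1, trivial⟩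
  have hwcont : ContinuousOn (fun p : ℝ × ℝ => u p.1 p.2 - ψ p.1 p.2) Q := by
    apply (hcont.mono hQsub).sub
    apply Continuous.continuousOn
    fun_prop
  obtain ⟨⟨s, y⟩, hsyQ, hminw⟩ := hQcompact.exists_isMinOn hQne hwcont
  have hminw' : ∀ q ∈ Q, u s y - ψ s y ≤ u q.1 q.2 - ψ q.1 q.2 := fun q hq => hminw hq
  have hkey : 0 ≤ u s y - ψ s y := by
    by_contra hneg
    push_neg at hneg
    have hs0 : 0 ≤ s := hsyQ.1.1
    have hst : s ≤ t₀ := hsyQ.1.2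
    have hy1 : x₀ - 1 ≤ y := hsyQ.2.1
    have hy2 : y ≤ x₀ + 1 := hsyQ.2.2
    have hinit0 : ∀ x ∈ Icc (x₀-1) (x₀+1), 0 ≤ u 0 x - ψ 0 x := by
      intro x hx
      have h1 : ψ 0 x = m * Real.cos (c * (x - x₀)) := by
        show m * Real.exp (-(lam * 0)) * Real.cos (c * (x - x₀)) = _
        rw [mul_zero, neg_zero, Real.exp_zero, mul_one]
      have h2 : m * Real.cos (c * (x - x₀)) ≤ m :=
        (mul_le_of_le_one_right hm.le (Real.cos_le_one _))
      rw [hinit x, h1]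
      linarith [hmle x hx]
    have hbdry1 : ∀ t : ℝ, ψ t (x₀ - 1) = 0 := by
      intro t
      show m * Real.exp (-(lam * t)) * Real.cos (c * (x₀ - 1 - x₀)) = 0
      have h1 : c * (x₀ - 1 - x₀) = -(π/2) := by rw [hcdef]; ring
      rw [h1, Real.cos_neg, Real.cos_pi_div_two, mul_zero]
    have hbdry2 : ∀ t : ℝ, ψ t (x₀ + 1) = 0 := by
      intro t
      show m * Real.exp (-(lam * t)) * Real.cos (c * (x₀ + 1 - x₀)) = 0
      have h1 : c * (x₀ + 1 - x₀) = π/2 := by rw [hcdef]; ring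
      rw [h1, Real.cos_pi_div_two, mul_zero]
    have hs : 0 < s := by
      rcases eq_or_lt_of_le hs0 with h | h
      · exfalso
        have h2 := hinit0 y ⟨hy1, hy2⟩
        rw [← h] at hneg
        linarith
      · exact h
    have hy1' : x₀ - 1 < y := by
      rcases eq_or_lt_of_le hy1 with h | h
      · exfalso
        rw [← h] at hneg
        rw [hbdry1 s] at hneg
        linarith [hu0 s (x₀ - 1) hs0]
      · exact h
    have hy2' : y < x₀ + 1 := by
      rcases eq_or_lt_of_le hy2 with h | h
      · exfalso
        rw [h, hbdry2 s] at hneg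
        linarith [hu0 s (x₀ + 1) hs0]
      · exact h
    have hψs : 0 < ψ s y := by
      linarith [hu0 s y hs0]
    have hψval : ψ s y = m * Real.exp (-(lam * s)) * Real.cos (c * (y - x₀)) := rfl
    -- time derivative
    have hdt : DifferentiableAt ℝ (fun t => u t y) s :=
      ((hContT y).differentiableOn one_ne_zero).differentiableAt (Ioi_mem_nhds hs)
    have hexpD : HasDerivAt (fun t : ℝ => Real.exp (-(lam * t)))
        (Real.exp (-(lam * s)) * -(lam * 1)) s :=
      (((hasDerivAt_id s).const_mul lam).neg).exp
    have hgt : HasDerivAt (fun t => u t y - m * Real.exp (-(lam * t)) * Real.cos (c * (y - x₀)))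
        (pdT u s y - m * (Real.exp (-(lam * s)) * -(lam * 1)) * Real.cos (c * (y - x₀))) s := by
      have h2 := (hexpD.const_mul m).mul_const (Real.cos (c * (y - x₀)))
      exact hdt.hasDerivAt.sub h2
    have hT : pdT u s y - m * (Real.exp (-(lam * s)) * -(lam * 1)) * Real.cos (c * (y - x₀)) ≤ 0 := by
      refine deriv_nonpos_of_left_min hgt ?_
      filter_upwards [Ioo_mem_nhdsLT_of_mem (⟨hs, le_rfl⟩ : s ∈ Ioc 0 s)] with t ht
      exact hminw' (t, y) ⟨⟨ht.1.le, ht.2.le.trans hst⟩, ⟨hy1, hy2⟩⟩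
    have hT' : pdT u s y ≤ -lam * ψ s y := by
      have heq : m * (Real.exp (-(lam * s)) * -(lam * 1)) * Real.cos (c * (y - x₀))
          = -lam * ψ s y := by rw [hψval]; ring
      linarith
    -- space second derivative
    have hux : ContDiff ℝ 2 (u s) := hContX s hs
    have huxd : Differentiable ℝ (u s) := hux.differentiable (by norm_num)
    have hux' : ContDiff ℝ 1 (deriv (u s)) := by
      have h2 : ContDiff ℝ ((1 : WithTop ℕ∞) + 1) (u s) := by norm_num; exact hux
      exact (contDiff_succ_iff_deriv.mp h2).2.2
    set h : ℝ → ℝ := fun x => u s x - m * Real.exp (-(lam * s)) * Real.cos (c * (x - x₀))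
      with hhdef
    have hhC : ContDiff ℝ 2 h := by
      apply hux.sub
      exact contDiff_const.mul
        (Real.contDiff_cos.comp (contDiff_const.mul (contDiff_id.sub contDiff_const)))
    have hlm : IsLocalMin h y := by
      filter_upwards [Icc_mem_nhds hy1' hy2'] with x hx
      exact hminw' (s, x) ⟨⟨hs0, hst⟩, hx⟩
    have hXX0 : 0 ≤ deriv (deriv h) y := second_deriv_nonneg_of_isLocalMin hhC hlm
    have hderiv_h : deriv h = fun x =>
        deriv (u s) x - m * Real.exp (-(lam * s)) * (-Real.sin (c * (x - x₀)) * (c * 1)) := by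
      funext x
      have hinner : HasDerivAt (fun x : ℝ => c * (x - x₀)) (c * 1) x :=
        ((hasDerivAt_id x).sub_const x₀).const_mul c
      have hcos : HasDerivAt (fun x : ℝ => Real.cos (c * (x - x₀)))
          (-Real.sin (c * (x - x₀)) * (c * 1)) x := hinner.cos
      exact ((huxd x).hasDerivAt.sub (hcos.const_mul (m * Real.exp (-(lam * s))))).deriv
    have hdd : deriv (deriv h) y = pdXX u s y
        - m * Real.exp (-(lam * s)) * (-(Real.cos (c * (y - x₀)) * (c * 1)) * (c * 1)) := by
      rw [hderiv_h]
      have hinner : HasDerivAt (fun x : ℝ => c * (x - x₀)) (c * 1) y :=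
        ((hasDerivAt_id y).sub_const x₀).const_mul c
      have hsin : HasDerivAt (fun x : ℝ => Real.sin (c * (x - x₀)))
          (Real.cos (c * (y - x₀)) * (c * 1)) y := hinner.sin
      have h2 : HasDerivAt (fun x : ℝ =>
          m * Real.exp (-(lam * s)) * (-Real.sin (c * (x - x₀)) * (c * 1)))
          (m * Real.exp (-(lam * s)) * (-(Real.cos (c * (y - x₀)) * (c * 1)) * (c * 1))) y :=
        HasDerivAt.const_mul (m * Real.exp (-(lam * s)))
          (HasDerivAt.mul_const (HasDerivAt.neg hsin) (c * 1))
      have hd2 : HasDerivAt (deriv (u s)) (deriv (deriv (u s)) y) y :=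
        (hux'.differentiable one_ne_zero y).hasDerivAt
      have h3 : deriv (fun x => deriv (u s) x - m * Real.exp (-(lam * s)) * (-Real.sin (c * (x - x₀)) * (c * 1))) y
          = deriv (deriv (u s)) y - m * Real.exp (-(lam * s)) * (-(Real.cos (c * (y - x₀)) * (c * 1)) * (c * 1)) :=
        (hd2.sub h2).deriv
      rw [h3]
      rfl
    have hXX : -(d * c^2 * ψ s y) ≤ d * pdXX u s y := by
      rw [hdd] at hXX0
      have heq : m * Real.exp (-(lam * s)) * (-(Real.cos (c * (y - x₀)) * (c * 1)) * (c * 1))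
          = -(c^2) * ψ s y := by rw [hψval]; ring
      rw [heq] at hXX0
      nlinarith [hXX0, hd.le]
    -- nonlinear term lower bound
    have huy0 : 0 ≤ u s y := hu0 s y hs0
    have huyM : u s y ≤ M := hM s y hs0
    have hvy0 : 0 ≤ v s y := hv0 s y hs0
    have huψ : u s y ≤ ψ s y := by linarith
    have hlow : -(r * (1 + M) * ψ s y) ≤ r * u s y * (1 - u s y + b * v s y) := by
      have h1 : -(1+M) ≤ 1 - u s y + b * v s y := by
        have := mul_nonneg hb.le hvy0
        linarith
      have h2 : r * u s y * (-(1+M)) ≤ r * u s y * (1 - u s y + b * v s y) :=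
        mul_le_mul_of_nonneg_left h1 (mul_nonneg hr.le huy0)
      have h3 : -(r * (1 + M) * ψ s y) ≤ r * u s y * (-(1+M)) := by
        nlinarith [huψ, mul_nonneg hr.le hM0, hr.le, hm.le]
      linarith
    -- combine
    have hpde' := hpde s y hs
    have hlam_ψ : lam * ψ s y = d * c^2 * ψ s y + r * (1 + M) * ψ s y + ψ s y := by
      rw [hlamdef]; ring
    linarith [hT', hlow, hpde', hXX, hlam_ψ, hψs]
  -- conclude
  have hfinal := hminw' (t₀, x₀) ⟨⟨ht₀.le, le_rfl⟩, ⟨by linarith, by linarith⟩⟩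
  have hψt : ψ t₀ x₀ = m * Real.exp (-(lam * t₀)) := by
    show m * Real.exp (-(lam * t₀)) * Real.cos (c * (x₀ - x₀)) = _
    rw [show x₀ - x₀ = (0:ℝ) by ring, mul_zero, Real.cos_zero, mul_one]
  have hψpos : 0 < ψ t₀ x₀ := by rw [hψt]; positivity
  nlinarith [hfinal, hkey]

set_option maxHeartbeats 3000000 in
/-- Lemma 3.3: the solution stays in `(0, E₁] × (0, E₂]` where
`E₁ = max{sup φ₁, k₁, (k₁/k₂) sup φ₂}` and `E₂ = max{sup φ₂, k₂, (k₂/k₁) sup φ₁}`. -/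
theorem solution_bounds
    (d₁ d₂ r₁ r₂ b₁ b₂ : ℝ)
    (hd₁ : 0 < d₁) (hd₂ : 0 < d₂) (hr₁ : 0 < r₁) (hr₂ : 0 < r₂)
    (hb₁ : 0 < b₁) (hb₂ : 0 < b₂) (hbb : b₁ * b₂ < 1)
    (φ₁ φ₂ : ℝ → ℝ)
    (hφ₁pos : ∀ x, 0 < φ₁ x) (hφ₂pos : ∀ x, 0 < φ₂ x)
    (hφ₁bdd : ∃ M, ∀ x, φ₁ x ≤ M) (hφ₂bdd : ∃ M, ∀ x, φ₂ x ≤ M)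
    (hφ₁uc : UniformContinuous φ₁) (hφ₂uc : UniformContinuous φ₂)
    (u₁ u₂ : ℝ → ℝ → ℝ)
    (hu : IsLVSolution d₁ d₂ r₁ r₂ b₁ b₂ φ₁ φ₂ u₁ u₂)
    (hnn : ∀ t x : ℝ, 0 ≤ t → 0 ≤ u₁ t x ∧ 0 ≤ u₂ t x) :
    ∀ t x : ℝ, 0 < t →
      (0 < u₁ t x ∧
        u₁ t x ≤ max (max (⨆ y, φ₁ y) ((1 + b₁) / (1 - b₁ * b₂)))
          ((((1 + b₁) / (1 - b₁ * b₂)) / ((1 + b₂) / (1 - b₁ * b₂))) * ⨆ y, φ₂ y)) ∧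
      (0 < u₂ t x ∧
        u₂ t x ≤ max (max (⨆ y, φ₂ y) ((1 + b₂) / (1 - b₁ * b₂)))
          ((((1 + b₂) / (1 - b₁ * b₂)) / ((1 + b₁) / (1 - b₁ * b₂))) * ⨆ y, φ₁ y)) := by
  intro t₀ x₀ ht₀
  obtain ⟨M₁, hM₁'⟩ := hu.reg1.bounded
  obtain ⟨M₂, hM₂'⟩ := hu.reg2.bounded
  have hM₁ : ∀ t x : ℝ, 0 ≤ t → u₁ t x ≤ M₁ := fun t x ht => (abs_le.mp (hM₁' t x ht)).2
  have hM₂ : ∀ t x : ℝ, 0 ≤ t → u₂ t x ≤ M₂ := fun t x ht => (abs_le.mp (hM₂' t x ht)).2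
  have hu₁0 : ∀ t x : ℝ, 0 ≤ t → 0 ≤ u₁ t x := fun t x ht => (hnn t x ht).1
  have hu₂0 : ∀ t x : ℝ, 0 ≤ t → 0 ≤ u₂ t x := fun t x ht => (hnn t x ht).2
  have hcont₁ : ContinuousOn (fun p : ℝ × ℝ => u₁ p.1 p.2) (Ici 0 ×ˢ (univ : Set ℝ)) :=
    hu.reg1.unifCont.continuousOn
  have hcont₂ : ContinuousOn (fun p : ℝ × ℝ => u₂ p.1 p.2) (Ici 0 ×ˢ (univ : Set ℝ)) :=
    hu.reg2.unifCont.continuousOn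
  -- positivity
  have hpos₁ : 0 < u₁ t₀ x₀ :=
    pos_core u₁ u₂ d₁ r₁ b₁ M₁ t₀ x₀ φ₁ hu.reg1.contT hu.reg1.contX hu.pde1 hcont₁
      hu.init1 hφ₁pos hφ₁uc.continuous hd₁ hr₁ hb₁ hM₁ hu₁0 hu₂0 ht₀
  have hpos₂ : 0 < u₂ t₀ x₀ :=
    pos_core u₂ u₁ d₂ r₂ b₂ M₂ t₀ x₀ φ₂ hu.reg2.contT hu.reg2.contX hu.pde2 hcont₂
      hu.init2 hφ₂pos hφ₂uc.continuous hd₂ hr₂ hb₂ hM₂ hu₂0 hu₁0 ht₀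
  -- sup facts
  have hbdd₁ : BddAbove (range φ₁) := by
    obtain ⟨M, hM⟩ := hφ₁bdd
    exact ⟨M, fun z hz => by obtain ⟨w, rfl⟩ := hz; exact hM w⟩
  have hbdd₂ : BddAbove (range φ₂) := by
    obtain ⟨M, hM⟩ := hφ₂bdd
    exact ⟨M, fun z hz => by obtain ⟨w, rfl⟩ := hz; exact hM w⟩
  set S₁ := ⨆ y, φ₁ y with hS₁def
  set S₂ := ⨆ y, φ₂ y with hS₂def
  have hφ₁le : ∀ z, φ₁ z ≤ S₁ := fun z => le_ciSup hbdd₁ z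
  have hφ₂le : ∀ z, φ₂ z ≤ S₂ := fun z => le_ciSup hbdd₂ z
  have hS₁ : 0 < S₁ := lt_of_lt_of_le (hφ₁pos 0) (hφ₁le 0)
  have hS₂ : 0 < S₂ := lt_of_lt_of_le (hφ₂pos 0) (hφ₂le 0)
  have hbb' : (0:ℝ) < 1 - b₁ * b₂ := by linarith
  set k₁ := (1 + b₁) / (1 - b₁ * b₂) with hk₁def
  set k₂ := (1 + b₂) / (1 - b₁ * b₂) with hk₂def
  have hk₁ : 0 < k₁ := div_pos (by linarith) hbb'
  have hk₂ : 0 < k₂ := div_pos (by linarith) hbb'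
  set E₁ := max (max S₁ k₁) (k₁ / k₂ * S₂) with hE₁def
  set E₂ := max (max S₂ k₂) (k₂ / k₁ * S₁) with hE₂def
  have hE₁pos : 0 < E₁ := lt_of_lt_of_le hk₁ (le_max_of_le_left (le_max_right _ _))
  have hE₂pos : 0 < E₂ := lt_of_lt_of_le hk₂ (le_max_of_le_left (le_max_right _ _))
  have hE1 : 1 + b₁ * E₂ ≤ E₁ := E_ineq b₁ b₂ S₁ S₂ hb₁ hb₂ hbb hS₁ hS₂
  have hE2 : 1 + b₂ * E₁ ≤ E₂ := by
    have h := E_ineq b₂ b₁ S₂ S₁ hb₂ hb₁ (by linarith [hbb, mul_comm b₁ b₂]) hS₂ hS₁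
    rw [show b₂ * b₁ = b₁ * b₂ from mul_comm _ _] at h
    exact h
  have hφ₁E : ∀ z, φ₁ z ≤ E₁ := fun z =>
    le_trans (hφ₁le z) (le_max_of_le_left (le_max_left _ _))
  have hφ₂E : ∀ z, φ₂ z ≤ E₂ := fun z =>
    le_trans (hφ₂le z) (le_max_of_le_left (le_max_left _ _))
  -- upper bounds
  set δ : ℝ := 1 / (1 + 2 * (d₁ + d₂)) with hδdef
  have hδ : 0 < δ := by rw [hδdef]; positivity
  have hδd₁ : 2 * d₁ * δ < 1 := by
    rw [hδdef, mul_one_div, div_lt_one (by linarith)]; linarith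
  have hδd₂ : 2 * d₂ * δ < 1 := by
    rw [hδdef, mul_one_div, div_lt_one (by linarith)]; linarith
  have key : ∀ ε : ℝ, 0 < ε →
      max (u₁ t₀ x₀ / E₁ - ε * Real.exp t₀ * (1 + δ * x₀^2))
        (u₂ t₀ x₀ / E₂ - ε * Real.exp t₀ * (1 + δ * x₀^2)) ≤ 1 := by
    intro ε hε
    by_contra hcon
    push_neg at hcon
    set C := M₁ / E₁ + M₂ / E₂ + 1 with hCdef
    have hC : 0 < C := by
      have h1 : 0 ≤ M₁ / E₁ := div_nonneg (le_trans (hu₁0 0 0 le_rfl) (hM₁ 0 0 le_rfl)) hE₁pos.le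
      have h2 : 0 ≤ M₂ / E₂ := div_nonneg (le_trans (hu₂0 0 0 le_rfl) (hM₂ 0 0 le_rfl)) hE₂pos.le
      rw [hCdef]; linarith
    set R : ℝ := |x₀| + 1 + C / (ε * δ) with hRdef
    have hRx : |x₀| < R := by
      have : 0 ≤ C / (ε * δ) := div_nonneg hC.le (by positivity)
      rw [hRdef]; linarith
    have hR1 : 1 ≤ R := by
      have h1 : 0 ≤ |x₀| := abs_nonneg _
      have : 0 ≤ C / (ε * δ) := div_nonneg hC.le (by positivity)
      rw [hRdef]; linarith
    have hRC : C ≤ ε * δ * R^2 := by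
      have h1 : C / (ε * δ) ≤ R := by
        have h2 : 0 ≤ |x₀| := abs_nonneg _
        rw [hRdef]; linarith
      have h3 : R ≤ R^2 := by nlinarith [hR1]
      have h4 : 0 < ε * δ := by positivity
      calc C = ε * δ * (C / (ε * δ)) := by field_simp
      _ ≤ ε * δ * R := mul_le_mul_of_nonneg_left h1 h4.le
      _ ≤ ε * δ * R^2 := mul_le_mul_of_nonneg_left h3 h4.le
    -- tail bound at |x'| = R
    have hexp1 : ∀ τ : ℝ, 0 ≤ τ → 1 ≤ Real.exp τ := by
      intro τ hτ
      rw [show (1:ℝ) = Real.exp 0 from (Real.exp_zero).symm]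
      exact Real.exp_le_exp.mpr hτ
    have hbar : ∀ τ x' : ℝ, 0 ≤ τ → x'^2 = R^2 →
        ε * δ * R^2 ≤ ε * Real.exp τ * (1 + δ * x'^2) := by
      intro τ x' hτ hx'
      rw [hx']
      have h0 : 0 < δ * R^2 := by positivity
      nlinarith [hexp1 τ hτ]
    have hMn₁ : 0 ≤ M₁ / E₁ := div_nonneg (le_trans (hu₁0 0 0 le_rfl) (hM₁ 0 0 le_rfl)) hE₁pos.le
    have hMn₂ : 0 ≤ M₂ / E₂ := div_nonneg (le_trans (hu₂0 0 0 le_rfl) (hM₂ 0 0 le_rfl)) hE₂pos.le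
    rw [hCdef] at hRC
    have htail₁ : ∀ τ x' : ℝ, 0 ≤ τ → x'^2 = R^2 →
        u₁ τ x' / E₁ - ε * Real.exp τ * (1 + δ * x'^2) ≤ 0 := by
      intro τ x' hτ hx'
      have h1 : u₁ τ x' / E₁ ≤ M₁ / E₁ := by have := hM₁ τ x' hτ; gcongr
      have hb2 := hbar τ x' hτ hx'
      clear_value δ R E₁ E₂ C S₁ S₂ k₁ k₂
      linarith [h1, hb2, hRC, hMn₂]
    have htail₂ : ∀ τ x' : ℝ, 0 ≤ τ → x'^2 = R^2 →
        u₂ τ x' / E₂ - ε * Real.exp τ * (1 + δ * x'^2) ≤ 0 := by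
      intro τ x' hτ hx'
      have h1 : u₂ τ x' / E₂ ≤ M₂ / E₂ := by have := hM₂ τ x' hτ; gcongr
      have hb2 := hbar τ x' hτ hx'
      clear_value δ R E₁ E₂ C S₁ S₂ k₁ k₂
      linarith [h1, hb2, hRC, hMn₁]
    -- maximum over the rectangle
    set w₁ : ℝ × ℝ → ℝ := fun p => u₁ p.1 p.2 / E₁ - ε * Real.exp p.1 * (1 + δ * p.2^2)
      with hw₁def
    set w₂ : ℝ × ℝ → ℝ := fun p => u₂ p.1 p.2 / E₂ - ε * Real.exp p.1 * (1 + δ * p.2^2)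
      with hw₂def
    set Q : Set (ℝ × ℝ) := Icc 0 t₀ ×ˢ Icc (-R) R with hQdef
    have hQsub : Q ⊆ Ici 0 ×ˢ (univ : Set ℝ) := fun p hp => ⟨hp.1.1, trivial⟩
    have hbarcont : Continuous (fun p : ℝ × ℝ => ε * Real.exp p.1 * (1 + δ * p.2^2)) := by
      fun_prop
    have hWcont : ContinuousOn (fun p => max (w₁ p) (w₂ p)) Q := by
      have hc1 : ContinuousOn w₁ Q := ((hcont₁.mono hQsub).div_const E₁).sub hbarcont.continuousOn
      have hc2 : ContinuousOn w₂ Q := ((hcont₂.mono hQsub).div_const E₂).sub hbarcont.continuousOn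
      exact fun p hp => (hc1 p hp).max (hc2 p hp)
    have htx₀Q : (t₀, x₀) ∈ Q := ⟨⟨ht₀.le, le_rfl⟩, abs_le.mp hRx.le⟩
    obtain ⟨⟨s, y⟩, hsyQ, hmaxW⟩ := (isCompact_Icc.prod isCompact_Icc).exists_isMaxOn
      ⟨(t₀, x₀), htx₀Q⟩ hWcont
    have hmaxW' : ∀ q ∈ Q, max (w₁ q) (w₂ q) ≤ max (w₁ (s, y)) (w₂ (s, y)) :=
      fun q hq => hmaxW hq
    set K := max (w₁ (s, y)) (w₂ (s, y)) with hKdef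
    have hK : 1 < K := lt_of_lt_of_le hcon (hmaxW' (t₀, x₀) htx₀Q)
    have hs0 : 0 ≤ s := hsyQ.1.1
    have hst : s ≤ t₀ := hsyQ.1.2
    have hy1 : -R ≤ y := hsyQ.2.1
    have hy2 : y ≤ R := hsyQ.2.2
    have hs : 0 < s := by
      rcases eq_or_lt_of_le hs0 with h | h
      · exfalso
        have hb1 : w₁ (s, y) < 1 := by
          rw [hw₁def]
          simp only [← h]
          have h1 : u₁ 0 y = φ₁ y := hu.init1 y
          have h2 : φ₁ y / E₁ ≤ 1 := (div_le_one hE₁pos).mpr (hφ₁E y)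
          have h3 : 0 < ε * Real.exp 0 * (1 + δ * y^2) := by positivity
          rw [h1]
          linarith
        have hb2 : w₂ (s, y) < 1 := by
          rw [hw₂def]
          simp only [← h]
          have h1 : u₂ 0 y = φ₂ y := hu.init2 y
          have h2 : φ₂ y / E₂ ≤ 1 := (div_le_one hE₂pos).mpr (hφ₂E y)
          have h3 : 0 < ε * Real.exp 0 * (1 + δ * y^2) := by positivity
          rw [h1]
          linarith
        have : K < 1 := max_lt hb1 hb2
        linarith
      · exact h
    have hy1' : -R < y := by
      rcases eq_or_lt_of_le hy1 with h | h
      · exfalso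
        have hsq : y^2 = R^2 := by rw [← h]; ring
        have : K ≤ 0 := max_le (htail₁ s y hs0 hsq) (htail₂ s y hs0 hsq)
        linarith
      · exact h
    have hy2' : y < R := by
      rcases eq_or_lt_of_le hy2 with h | h
      · exfalso
        have hsq : y^2 = R^2 := by rw [h]
        have : K ≤ 0 := max_le (htail₁ s y hs0 hsq) (htail₂ s y hs0 hsq)
        linarith
      · exact h
    rcases max_cases (w₁ (s, y)) (w₂ (s, y)) with ⟨hKeq, _⟩ | ⟨hKeq, _⟩
    · exact upper_core u₁ u₂ d₁ r₁ b₁ E₁ E₂ ε δ t₀ R s y K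
        hu.reg1.contT hu.reg1.contX (hu.pde1 s y hs) hd₁ hr₁ hb₁ hE₁pos hE₂pos hE1
        hε hδ hδd₁ hs hst ⟨hy1', hy2'⟩
        (fun τ x' hτ hx' => le_trans (le_max_left _ _) (hmaxW' (τ, x') ⟨hτ, hx'⟩))
        ((hKdef.trans hKeq).symm)
        (le_trans (le_max_right (w₁ (s,y)) _) (le_of_eq hKdef.symm))
        (hu₂0 s y hs0) hK
    · exact upper_core u₂ u₁ d₂ r₂ b₂ E₂ E₁ ε δ t₀ R s y K
        hu.reg2.contT hu.reg2.contX (hu.pde2 s y hs) hd₂ hr₂ hb₂ hE₂pos hE₁pos hE2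
        hε hδ hδd₂ hs hst ⟨hy1', hy2'⟩
        (fun τ x' hτ hx' => le_trans (le_max_right _ _) (hmaxW' (τ, x') ⟨hτ, hx'⟩))
        ((hKdef.trans hKeq).symm)
        (le_trans (le_max_left _ (w₂ (s,y))) (le_of_eq hKdef.symm))
        (hu₁0 s y hs0) hK
  -- let ε → 0
  have hub : ∀ (uu : ℝ) (E : ℝ), 0 < E →
      (∀ ε : ℝ, 0 < ε → uu / E - ε * Real.exp t₀ * (1 + δ * x₀^2) ≤ 1) → uu ≤ E := by
    intro uu E hE hall
    have h2 : ∀ ε' : ℝ, 0 < ε' → uu ≤ E + ε' := by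
      intro ε' hε'
      have hc : 0 < E * (Real.exp t₀ * (1 + δ * x₀^2)) := by positivity
      set ε := ε' / (E * (Real.exp t₀ * (1 + δ * x₀^2))) with hεdef
      have hεpos : 0 < ε := by rw [hεdef]; positivity
      have h3 := hall ε hεpos
      have h4 : uu / E ≤ 1 + ε * Real.exp t₀ * (1 + δ * x₀^2) := by linarith
      have h5 : uu ≤ E * (1 + ε * Real.exp t₀ * (1 + δ * x₀^2)) := by
        rw [div_le_iff₀ hE] at h4
        linarith [h4]
      have h6 : E * (ε * Real.exp t₀ * (1 + δ * x₀^2)) = ε' := by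
        rw [hεdef]; field_simp
      nlinarith [h5, h6]
    by_contra hgt
    push_neg at hgt
    have := h2 ((uu - E) / 2) (by linarith)
    linarith
  have hub₁ : u₁ t₀ x₀ ≤ E₁ :=
    hub (u₁ t₀ x₀) E₁ hE₁pos (fun ε hε => le_trans (le_max_left _ _) (key ε hε))
  have hub₂ : u₂ t₀ x₀ ≤ E₂ :=
    hub (u₂ t₀ x₀) E₂ hE₂pos (fun ε hε => le_trans (le_max_right _ _) (key ε hε))
  exact ⟨⟨hpos₁, hub₁⟩, ⟨hpos₂, hub₂⟩⟩
end

section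
/- Suppose the Lotka–Volterra cooperative system admits a traveling wave solution (ψ₁, ψ₂) connecting (0,0) with (k₁, k₂) with speed c. Let φ₁, φ₂ : ℝ → ℝ be continuous, compactly supported, with 0 ≤ φ_i(x) < k_i for all x (i = 1,2), and let (u₁, u₂) be a classical solution of the system with initial data (φ₁, φ₂). Then for every ε > 0, lim_{t→∞} sup_{|x| ≥ (c+ε)t} u₁(t,x) = 0 and lim_{t→∞} sup_{|x| ≥ (c+ε)t} u₂(t,x) = 0. -/
open Real Set Filter Topology MeasureTheory

/-- `(ψ₁, ψ₂)` is a traveling wave solution of the cooperative system with speed `c`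
connecting `(0,0)` with `(k₁,k₂)`. -/
structure IsTravelingWave (d₁ d₂ r₁ r₂ b₁ b₂ c : ℝ) (ψ₁ ψ₂ : ℝ → ℝ) : Prop where
  pos1 : ∀ s, 0 < ψ₁ s
  pos2 : ∀ s, 0 < ψ₂ s
  bdd1 : ∃ M, ∀ s, ψ₁ s ≤ M
  bdd2 : ∃ M, ∀ s, ψ₂ s ≤ M
  uc1 : UniformContinuous ψ₁
  uc2 : UniformContinuous ψ₂
  smooth1 : ContDiff ℝ 2 ψ₁
  smooth2 : ContDiff ℝ 2 ψ₂
  ode1 : ∀ s : ℝ,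
    d₁ * deriv (deriv ψ₁) s - c * deriv ψ₁ s + r₁ * ψ₁ s * (1 - ψ₁ s + b₁ * ψ₂ s) = 0
  ode2 : ∀ s : ℝ,
    d₂ * deriv (deriv ψ₂) s - c * deriv ψ₂ s + r₂ * ψ₂ s * (1 - ψ₂ s + b₂ * ψ₁ s) = 0
  limNeg1 : Tendsto ψ₁ atBot (𝓝 0)
  limNeg2 : Tendsto ψ₂ atBot (𝓝 0)
  limPos1 : Tendsto ψ₁ atTop (𝓝 ((1 + b₁) / (1 - b₁ * b₂)))
  limPos2 : Tendsto ψ₂ atTop (𝓝 ((1 + b₂) / (1 - b₁ * b₂)))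

/-- If `f` is C², `a` is a global minimum, then the second derivative at `a` is ≥ 0. -/
lemma second_deriv_nonneg_of_min {f : ℝ → ℝ} (hf : ContDiff ℝ 2 f) {a : ℝ}
    (hmin : ∀ x, f a ≤ f x) : 0 ≤ deriv (deriv f) a := by
  by_contra h
  push_neg at h
  have hf1 : Differentiable ℝ f := hf.differentiable two_ne_zero
  have hg : Differentiable ℝ (deriv f) := (hf.iterate_deriv' 1 1).differentiable one_ne_zero
  have hga : deriv f a = 0 := by
    have : IsLocalMin f a := (isMinOn_univ_iff.mpr hmin).isLocalMin (by simp)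
    exact this.deriv_eq_zero
  have hslope : Tendsto (slope (deriv f) a) (𝓝[>] a) (𝓝 (deriv (deriv f) a)) :=
    (hasDerivAt_iff_tendsto_slope.mp (hg a).hasDerivAt).mono_left
      (nhdsWithin_mono _ (fun x hx => ne_of_gt hx))
  have hev : ∀ᶠ x in 𝓝[>] a, slope (deriv f) a x < 0 := hslope.eventually_lt_const h
  rw [eventually_nhdsWithin_iff] at hev
  rcases Metric.eventually_nhds_iff.mp hev with ⟨δ, hδ, hball⟩
  -- deriv f < 0 on Ioo a (a+δ)
  have hneg : ∀ x ∈ Ioo a (a + δ/2), deriv f x < 0 := by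
    intro x hx
    have hxa : a < x := hx.1
    have hd : dist x a < δ := by
      rw [Real.dist_eq, abs_of_pos (by linarith)]
      linarith [hx.2]
    have := hball hd hxa
    rw [slope_def_field, hga, sub_zero, div_neg_iff] at this
    rcases this with ⟨_, h2⟩ | ⟨h1, _⟩
    · linarith
    · exact h1
  have hanti : StrictAntiOn f (Icc a (a + δ/2)) := by
    apply strictAntiOn_of_deriv_neg (convex_Icc _ _) hf1.continuous.continuousOn
    intro x hx
    rw [interior_Icc] at hx
    exact hneg x hx
  have : f (a + δ/2) < f a := hanti (by constructor <;> linarith) (by constructor <;> linarith) (by linarith)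
  exact absurd (hmin (a + δ/2)) (not_le.mpr this)

/-- If `f t₀ ≤ f t` for all `t ∈ [0, t₀)` and `f` is differentiable at `t₀ > 0`,
then `deriv f t₀ ≤ 0`. -/
lemma left_min_deriv_nonpos {f : ℝ → ℝ} {t₀ f' : ℝ} (ht₀ : 0 < t₀)
    (hd : HasDerivAt f f' t₀) (h : ∀ t ∈ Ico 0 t₀, f t₀ ≤ f t) : f' ≤ 0 := by
  have hslope : Tendsto (slope f t₀) (𝓝[<] t₀) (𝓝 f') :=
    (hasDerivAt_iff_tendsto_slope.mp hd).mono_left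
      (nhdsWithin_mono _ (fun x hx => ne_of_lt hx))
  refine le_of_tendsto hslope ?_
  rw [eventually_nhdsWithin_iff]
  filter_upwards [eventually_gt_nhds ht₀] with t ht ht'
  have ht' : t < t₀ := ht'
  have : f t₀ ≤ f t := h t ⟨le_of_lt ht, ht'⟩
  rw [slope_def_field]
  apply div_nonpos_of_nonneg_of_nonpos <;> linarith


/-- Contradiction at the first-touch point of the penalized comparison argument. -/
lemma comp_point_contra (d L K η T t₀ x₀ : ℝ) (w wo : ℝ → ℝ → ℝ) (a c : ℝ)
    (hd : 0 < d) (hL : 0 ≤ L) (hK : 2 * d + 2 * L < K) (hη : 0 < η)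
    (ht₀ : 0 < t₀) (ht₀T : t₀ ≤ T)
    (hdt : DifferentiableAt ℝ (fun s => w s x₀) t₀)
    (hdx : ContDiff ℝ 2 (w t₀))
    (ha : |a| ≤ L) (hc0 : 0 ≤ c) (hcL : c ≤ L)
    (hpde : d * pdXX w t₀ x₀ + a * w t₀ x₀ + c * wo t₀ x₀ ≤ pdT w t₀ x₀)
    (hz0 : w t₀ x₀ + η * Real.exp (K * t₀) * (1 + x₀ ^ 2) = 0)
    (hzo : 0 ≤ wo t₀ x₀ + η * Real.exp (K * t₀) * (1 + x₀ ^ 2))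
    (hxmin : ∀ x, 0 ≤ w t₀ x + η * Real.exp (K * t₀) * (1 + x ^ 2))
    (htmin : ∀ t ∈ Ico 0 t₀, 0 ≤ w t x₀ + η * Real.exp (K * t) * (1 + x₀ ^ 2)) :
    False := by
  set e : ℝ := Real.exp (K * t₀) with he
  have he0 : 0 < e := Real.exp_pos _
  -- space: second derivative test
  have hwdiff : Differentiable ℝ (w t₀) := hdx.differentiable two_ne_zero
  have hgdiff : ∀ x : ℝ, HasDerivAt (fun y : ℝ => η * e * (1 + y ^ 2)) (η * e * (2 * x)) x := by
    intro x
    have h1 : HasDerivAt (fun y : ℝ => 1 + y ^ 2) (2 * x) x := by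
      simpa using (hasDerivAt_pow 2 x).const_add 1
    simpa [mul_comm, mul_assoc, mul_left_comm] using h1.const_mul (η * e)
  have hf : ContDiff ℝ 2 (fun x => w t₀ x + η * e * (1 + x ^ 2)) :=
    hdx.add (contDiff_const.mul (contDiff_const.add (contDiff_id.pow 2)))
  have hmin : ∀ x, (fun x => w t₀ x + η * e * (1 + x ^ 2)) x₀ ≤ (fun x => w t₀ x + η * e * (1 + x ^ 2)) x := by
    intro x; simp only; rw [hz0]; exact hxmin x
  have h2nd := second_deriv_nonneg_of_min hf hmin
  have hderiv1 : deriv (fun x => w t₀ x + η * e * (1 + x ^ 2)) = fun x => deriv (w t₀) x + η * e * (2 * x) := by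
    funext x
    rw [deriv_fun_add (hwdiff x) (hgdiff x).differentiableAt, (hgdiff x).deriv]
  have hderivw : Differentiable ℝ (deriv (w t₀)) := by
    have := (hdx.iterate_deriv' 1 1).differentiable one_ne_zero
    exact this
  have h2nd' : deriv (deriv (fun x => w t₀ x + η * e * (1 + x ^ 2))) x₀
      = pdXX w t₀ x₀ + η * e * 2 := by
    rw [hderiv1]
    have hg2 : HasDerivAt (fun x : ℝ => η * e * (2 * x)) (η * e * 2) x₀ := by
      simpa [mul_assoc] using (hasDerivAt_id x₀).const_mul (η * e * 2)
    rw [deriv_fun_add (hderivw x₀) hg2.differentiableAt, hg2.deriv, pdXX]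
  have hxx : -(2 * η * e) ≤ pdXX w t₀ x₀ := by
    rw [h2nd'] at h2nd; linarith
  -- time: left derivative test
  have hF : HasDerivAt (fun t => w t x₀ + η * Real.exp (K * t) * (1 + x₀ ^ 2))
      (pdT w t₀ x₀ + η * (Real.exp (K * t₀) * K) * (1 + x₀ ^ 2)) t₀ := by
    have h1 : HasDerivAt (fun t : ℝ => Real.exp (K * t)) (Real.exp (K * t₀) * K) t₀ := by
      simpa [mul_comm] using ((hasDerivAt_id t₀).const_mul K).exp
    have h2 := ((h1.const_mul η).mul_const (1 + x₀ ^ 2))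
    have h3 : HasDerivAt (fun s => w s x₀) (pdT w t₀ x₀) t₀ := hdt.hasDerivAt
    simpa [mul_assoc] using h3.fun_add h2
  have htd : pdT w t₀ x₀ + η * (Real.exp (K * t₀) * K) * (1 + x₀ ^ 2) ≤ 0 := by
    apply left_min_deriv_nonpos ht₀ hF
    intro t ht
    have h1 := htmin t ht
    have h2 : w t₀ x₀ + η * Real.exp (K * t₀) * (1 + x₀ ^ 2) = 0 := hz0
    simp only [h2]; linarith
  -- arithmetic contradiction
  set q : ℝ := η * e * (1 + x₀ ^ 2) with hq
  have hx2 : (0:ℝ) ≤ x₀ ^ 2 := sq_nonneg _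
  have hq1 : η * e ≤ q := by
    rw [hq]; nlinarith [mul_nonneg (mul_nonneg hη.le he0.le) hx2]
  have hq0 : 0 < q := by rw [hq]; positivity
  have hwa : w t₀ x₀ = -q := by linarith
  have hwo : -q ≤ wo t₀ x₀ := by rw [hq]; linarith
  have haw : -(L * q) ≤ a * w t₀ x₀ := by
    rw [hwa]
    have h2 : a ≤ L := (abs_le.mp ha).2
    nlinarith [mul_nonneg (sub_nonneg.mpr h2) hq0.le]
  have hcw : -(L * q) ≤ c * wo t₀ x₀ := by
    rcases le_or_gt 0 (wo t₀ x₀) with h | h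
    · nlinarith [mul_nonneg hc0 h, mul_nonneg hL hq0.le]
    · nlinarith [mul_le_mul_of_nonpos_right hcL h.le, mul_le_mul_of_nonneg_left hwo hL]
  have hdxx : -(2 * d * (η * e)) ≤ d * pdXX w t₀ x₀ := by
    nlinarith [mul_le_mul_of_nonneg_left hxx hd.le]
  have htd' : pdT w t₀ x₀ ≤ -(K * q) := by
    have : η * (Real.exp (K * t₀) * K) * (1 + x₀ ^ 2) = K * q := by rw [hq, ← he]; ring
    linarith
  have h2dq : 2 * d * (η * e) ≤ 2 * d * q :=
    mul_le_mul_of_nonneg_left hq1 (by linarith)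
  have hKq : K * q ≤ (2 * d + 2 * L) * q := by linarith
  have : K ≤ 2 * d + 2 * L := le_of_mul_le_mul_right (by linarith) hq0
  linarith


/-- Comparison principle for a cooperative 2-component parabolic system on `[0,T] × ℝ`. -/
lemma comparison_principle
    (d₁ d₂ L T M : ℝ) (hd₁ : 0 < d₁) (hd₂ : 0 < d₂) (hL : 0 ≤ L) (hM : 0 ≤ M)
    (w₁ w₂ a₁ a₂ c₁ c₂ : ℝ → ℝ → ℝ)
    (hbw₁ : ∀ t ∈ Icc (0:ℝ) T, ∀ x : ℝ, |w₁ t x| ≤ M)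
    (hbw₂ : ∀ t ∈ Icc (0:ℝ) T, ∀ x : ℝ, |w₂ t x| ≤ M)
    (hcw₁ : ContinuousOn (fun p : ℝ × ℝ => w₁ p.1 p.2) (Icc 0 T ×ˢ univ))
    (hcw₂ : ContinuousOn (fun p : ℝ × ℝ => w₂ p.1 p.2) (Icc 0 T ×ˢ univ))
    (hdt₁ : ∀ x : ℝ, ∀ t ∈ Ioc (0:ℝ) T, DifferentiableAt ℝ (fun s => w₁ s x) t)
    (hdt₂ : ∀ x : ℝ, ∀ t ∈ Ioc (0:ℝ) T, DifferentiableAt ℝ (fun s => w₂ s x) t)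
    (hdx₁ : ∀ t ∈ Ioc (0:ℝ) T, ContDiff ℝ 2 (w₁ t))
    (hdx₂ : ∀ t ∈ Ioc (0:ℝ) T, ContDiff ℝ 2 (w₂ t))
    (hab₁ : ∀ t ∈ Ioc (0:ℝ) T, ∀ x : ℝ, |a₁ t x| ≤ L)
    (hab₂ : ∀ t ∈ Ioc (0:ℝ) T, ∀ x : ℝ, |a₂ t x| ≤ L)
    (hcb₁ : ∀ t ∈ Ioc (0:ℝ) T, ∀ x : ℝ, 0 ≤ c₁ t x ∧ c₁ t x ≤ L)
    (hcb₂ : ∀ t ∈ Ioc (0:ℝ) T, ∀ x : ℝ, 0 ≤ c₂ t x ∧ c₂ t x ≤ L)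
    (hpde₁ : ∀ t ∈ Ioc (0:ℝ) T, ∀ x : ℝ,
      d₁ * pdXX w₁ t x + a₁ t x * w₁ t x + c₁ t x * w₂ t x ≤ pdT w₁ t x)
    (hpde₂ : ∀ t ∈ Ioc (0:ℝ) T, ∀ x : ℝ,
      d₂ * pdXX w₂ t x + a₂ t x * w₂ t x + c₂ t x * w₁ t x ≤ pdT w₂ t x)
    (hinit₁ : ∀ x : ℝ, 0 ≤ w₁ 0 x) (hinit₂ : ∀ x : ℝ, 0 ≤ w₂ 0 x) :
    ∀ t ∈ Icc (0:ℝ) T, ∀ x : ℝ, 0 ≤ w₁ t x ∧ 0 ≤ w₂ t x := by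
  set K : ℝ := 2 * max d₁ d₂ + 2 * L + 1 with hKdef
  have hK0 : 0 ≤ K := by
    have := le_max_left d₁ d₂
    simp only [hKdef]; nlinarith [hd₁, hd₂, le_max_left d₁ d₂]
  have hK₁ : 2 * d₁ + 2 * L < K := by
    have := le_max_left d₁ d₂; simp only [hKdef]; linarith
  have hK₂ : 2 * d₂ + 2 * L < K := by
    have := le_max_right d₁ d₂; simp only [hKdef]; linarith
  -- the key penalized positivity claim
  have key : ∀ η : ℝ, 0 < η → ∀ t ∈ Icc (0:ℝ) T, ∀ x : ℝ,
      0 < w₁ t x + η * Real.exp (K * t) * (1 + x ^ 2) ∧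
      0 < w₂ t x + η * Real.exp (K * t) * (1 + x ^ 2) := by
    intro η hη
    by_contra hcon
    push_neg at hcon
    obtain ⟨t₁, ht₁, x₁, hx₁⟩ := hcon
    -- the bad set
    set A : Set (ℝ × ℝ) := {p | p.1 ∈ Icc 0 T ∧
      (w₁ p.1 p.2 + η * Real.exp (K * p.1) * (1 + p.2 ^ 2) ≤ 0 ∨
       w₂ p.1 p.2 + η * Real.exp (K * p.1) * (1 + p.2 ^ 2) ≤ 0)} with hAdef
    have hAne : A.Nonempty := by
      refine ⟨(t₁, x₁), ht₁, ?_⟩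
      by_cases h1 : 0 < w₁ t₁ x₁ + η * Real.exp (K * t₁) * (1 + x₁ ^ 2)
      · exact Or.inr (hx₁ h1)
      · exact Or.inl (not_lt.mp h1)
    have hgcont : Continuous (fun p : ℝ × ℝ => η * Real.exp (K * p.1) * (1 + p.2 ^ 2)) := by
      fun_prop
    have hAclosed : IsClosed A := by
      have hstrip : IsClosed (Icc (0:ℝ) T ×ˢ (univ : Set ℝ)) := isClosed_Icc.prod isClosed_univ
      have h1 : IsClosed ((Icc (0:ℝ) T ×ˢ (univ : Set ℝ)) ∩
          (fun p : ℝ × ℝ => w₁ p.1 p.2 + η * Real.exp (K * p.1) * (1 + p.2 ^ 2)) ⁻¹' Iic 0) :=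
        (hcw₁.add hgcont.continuousOn).preimage_isClosed_of_isClosed hstrip isClosed_Iic
      have h2 : IsClosed ((Icc (0:ℝ) T ×ˢ (univ : Set ℝ)) ∩
          (fun p : ℝ × ℝ => w₂ p.1 p.2 + η * Real.exp (K * p.1) * (1 + p.2 ^ 2)) ⁻¹' Iic 0) :=
        (hcw₂.add hgcont.continuousOn).preimage_isClosed_of_isClosed hstrip isClosed_Iic
      have hA : A = ((Icc (0:ℝ) T ×ˢ (univ : Set ℝ)) ∩
          (fun p : ℝ × ℝ => w₁ p.1 p.2 + η * Real.exp (K * p.1) * (1 + p.2 ^ 2)) ⁻¹' Iic 0) ∪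
          ((Icc (0:ℝ) T ×ˢ (univ : Set ℝ)) ∩
          (fun p : ℝ × ℝ => w₂ p.1 p.2 + η * Real.exp (K * p.1) * (1 + p.2 ^ 2)) ⁻¹' Iic 0) := by
        ext p
        simp only [hAdef, mem_setOf_eq, mem_union, mem_inter_iff, mem_prod, mem_univ,
          and_true, mem_preimage, mem_Iic]
        tauto
      rw [hA]; exact h1.union h2
    set R : ℝ := Real.sqrt (M / η) with hRdef
    have hsub : A ⊆ Icc 0 T ×ˢ Icc (-R) R := by
      rintro ⟨t, x⟩ ⟨ht, hz⟩
      refine ⟨ht, ?_⟩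
      have he1 : 1 ≤ Real.exp (K * t) := Real.one_le_exp (mul_nonneg hK0 ht.1)
      have h1x : (0:ℝ) ≤ 1 + x ^ 2 := by positivity
      have hprod : 0 ≤ η * (1 + x ^ 2) * (Real.exp (K * t) - 1) :=
        mul_nonneg (mul_nonneg hη.le h1x) (sub_nonneg.mpr he1)
      have hx2 : x ^ 2 * η ≤ M := by
        rcases hz with h | h
        · have habs := abs_le.mp (hbw₁ t ht x)
          nlinarith [sq_nonneg x]
        · have habs := abs_le.mp (hbw₂ t ht x)
          nlinarith [sq_nonneg x]
      have hxR : |x| ≤ R := by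
        rw [hRdef, ← Real.sqrt_sq_eq_abs]
        exact Real.sqrt_le_sqrt ((le_div_iff₀ hη).mpr hx2)
      exact abs_le.mp hxR
    have hAcomp : IsCompact A :=
      (isCompact_Icc.prod isCompact_Icc).of_isClosed_subset hAclosed hsub
    obtain ⟨p₀, hp₀A, hp₀min⟩ := hAcomp.exists_isMinOn hAne continuous_fst.continuousOn
    obtain ⟨t₀, x₀⟩ := p₀
    have ht₀mem : t₀ ∈ Icc (0:ℝ) T := hp₀A.1
    have ht₀pos : 0 < t₀ := by
      rcases (lt_or_eq_of_le ht₀mem.1) with h | h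
      · exact h
      · exfalso
        rcases hp₀A.2 with hz | hz <;>
        · simp only at hz
          rw [← h] at hz
          simp only [mul_zero, Real.exp_zero, mul_one, one_mul] at hz
          nlinarith [hinit₁ x₀, hinit₂ x₀, sq_nonneg x₀]
    have ht₀Ioc : t₀ ∈ Ioc (0:ℝ) T := ⟨ht₀pos, ht₀mem.2⟩
    have hbefore : ∀ t, 0 ≤ t → t < t₀ → ∀ x : ℝ,
        0 < w₁ t x + η * Real.exp (K * t) * (1 + x ^ 2) ∧
        0 < w₂ t x + η * Real.exp (K * t) * (1 + x ^ 2) := by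
      intro t ht0 htt x
      have hnot : (t, x) ∉ A := by
        intro hmem
        have h2 := isMinOn_iff.mp hp₀min _ hmem
        simp only at h2
        linarith
      simp only [hAdef, mem_setOf_eq, not_and, not_or, not_le] at hnot
      exact hnot ⟨ht0, le_trans htt.le ht₀mem.2⟩
    have hat : ∀ x : ℝ, 0 ≤ w₁ t₀ x + η * Real.exp (K * t₀) * (1 + x ^ 2) ∧
        0 ≤ w₂ t₀ x + η * Real.exp (K * t₀) * (1 + x ^ 2) := by
      intro x
      have hgc : Continuous (fun t : ℝ => η * Real.exp (K * t) * (1 + x ^ 2)) := by fun_prop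
      have hsub2 : Ico 0 t₀ ⊆ Icc 0 T := fun s hs => ⟨hs.1, le_trans hs.2.le ht₀mem.2⟩
      have hne : (𝓝[Ico (0:ℝ) t₀] t₀).NeBot := right_nhdsWithin_Ico_neBot ht₀pos
      have hmem2 : ∀ᶠ s in 𝓝[Ico (0:ℝ) t₀] t₀, s ∈ Ico (0:ℝ) t₀ := eventually_mem_nhdsWithin
      constructor
      · have hcont1 : ContinuousWithinAt
            (fun t => w₁ t x + η * Real.exp (K * t) * (1 + x ^ 2)) (Icc 0 T) t₀ := by
          apply ContinuousWithinAt.add _ (hgc.continuousWithinAt)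
          have := (hcw₁.comp ((continuous_id.prodMk continuous_const).continuousOn :
              ContinuousOn (fun t : ℝ => (t, x)) (Icc 0 T))
            (fun t ht => ⟨ht, mem_univ x⟩)) t₀ ht₀mem
          exact this
        exact ge_of_tendsto (hcont1.mono hsub2)
          (hmem2.mono fun s hs => (hbefore s hs.1 hs.2 x).1.le)
      · have hcont2 : ContinuousWithinAt
            (fun t => w₂ t x + η * Real.exp (K * t) * (1 + x ^ 2)) (Icc 0 T) t₀ := by
          apply ContinuousWithinAt.add _ (hgc.continuousWithinAt)
          have := (hcw₂.comp ((continuous_id.prodMk continuous_const).continuousOn :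
              ContinuousOn (fun t : ℝ => (t, x)) (Icc 0 T))
            (fun t ht => ⟨ht, mem_univ x⟩)) t₀ ht₀mem
          exact this
        exact ge_of_tendsto (hcont2.mono hsub2)
          (hmem2.mono fun s hs => (hbefore s hs.1 hs.2 x).2.le)
    rcases hp₀A.2 with hz | hz
    · exact comp_point_contra d₁ L K η T t₀ x₀ w₁ w₂ (a₁ t₀ x₀) (c₁ t₀ x₀)
        hd₁ hL hK₁ hη ht₀pos ht₀mem.2 (hdt₁ x₀ t₀ ht₀Ioc) (hdx₁ t₀ ht₀Ioc)
        (hab₁ t₀ ht₀Ioc x₀) (hcb₁ t₀ ht₀Ioc x₀).1 (hcb₁ t₀ ht₀Ioc x₀).2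
        (hpde₁ t₀ ht₀Ioc x₀) (le_antisymm hz (hat x₀).1) (hat x₀).2
        (fun x => (hat x).1) (fun t ht => (hbefore t ht.1 ht.2 x₀).1.le)
    · exact comp_point_contra d₂ L K η T t₀ x₀ w₂ w₁ (a₂ t₀ x₀) (c₂ t₀ x₀)
        hd₂ hL hK₂ hη ht₀pos ht₀mem.2 (hdt₂ x₀ t₀ ht₀Ioc) (hdx₂ t₀ ht₀Ioc)
        (hab₂ t₀ ht₀Ioc x₀) (hcb₂ t₀ ht₀Ioc x₀).1 (hcb₂ t₀ ht₀Ioc x₀).2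
        (hpde₂ t₀ ht₀Ioc x₀) (le_antisymm hz (hat x₀).2) (hat x₀).1
        (fun x => (hat x).2) (fun t ht => (hbefore t ht.1 ht.2 x₀).2.le)
  -- conclude from the key claim by letting η → 0
  intro t ht x
  have hexp : 0 < Real.exp (K * t) := Real.exp_pos _
  have hx1 : (0:ℝ) < 1 + x ^ 2 := by positivity
  constructor
  · by_contra hneg
    push_neg at hneg
    have hη : 0 < -(w₁ t x) / (2 * (Real.exp (K * t) * (1 + x ^ 2))) :=
      div_pos (by linarith) (by positivity)
    have h := (key _ hη t ht x).1
    have heq : -(w₁ t x) / (2 * (Real.exp (K * t) * (1 + x ^ 2))) *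
        Real.exp (K * t) * (1 + x ^ 2) = -(w₁ t x) / 2 := by
      field_simp
    rw [heq] at h
    linarith
  · by_contra hneg
    push_neg at hneg
    have hη : 0 < -(w₂ t x) / (2 * (Real.exp (K * t) * (1 + x ^ 2))) :=
      div_pos (by linarith) (by positivity)
    have h := (key _ hη t ht x).2
    have heq : -(w₂ t x) / (2 * (Real.exp (K * t) * (1 + x ^ 2))) *
        Real.exp (K * t) * (1 + x ^ 2) = -(w₂ t x) / 2 := by
      field_simp
    rw [heq] at h
    linarith


/-- Derivative facts for a traveling profile `ψ (σ x + c t + s₀)` with `σ² = 1`. -/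
lemma travel_derivs (ψ : ℝ → ℝ) (hψ : ContDiff ℝ 2 ψ) (σ cc s₀ : ℝ) (hσ : σ * σ = 1)
    (t x : ℝ) :
    HasDerivAt (fun s => ψ (σ * x + cc * s + s₀)) (cc * deriv ψ (σ * x + cc * t + s₀)) t ∧
    deriv (deriv (fun y => ψ (σ * y + cc * t + s₀))) x
      = deriv (deriv ψ) (σ * x + cc * t + s₀) ∧
    ContDiff ℝ 2 (fun y : ℝ => ψ (σ * y + cc * t + s₀)) := by
  have hψd : Differentiable ℝ ψ := hψ.differentiable two_ne_zero
  have hψ'd : Differentiable ℝ (deriv ψ) := (hψ.iterate_deriv' 1 1).differentiable one_ne_zero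
  have hafft : HasDerivAt (fun s : ℝ => σ * x + cc * s + s₀) cc t := by
    simpa using (((hasDerivAt_id t).const_mul cc).const_add (σ * x)).add_const s₀
  have hvt : HasDerivAt (fun s => ψ (σ * x + cc * s + s₀))
      (deriv ψ (σ * x + cc * t + s₀) * cc) t :=
    (hψd _).hasDerivAt.comp t hafft
  have haffx : ∀ y : ℝ, HasDerivAt (fun y : ℝ => σ * y + cc * t + s₀) σ y := by
    intro y
    simpa using (((hasDerivAt_id y).const_mul σ).add_const (cc * t)).add_const s₀
  have hvx : ∀ y : ℝ, HasDerivAt (fun y => ψ (σ * y + cc * t + s₀))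
      (deriv ψ (σ * y + cc * t + s₀) * σ) y := fun y => (hψd _).hasDerivAt.comp y (haffx y)
  have hd1 : deriv (fun y => ψ (σ * y + cc * t + s₀))
      = fun y => deriv ψ (σ * y + cc * t + s₀) * σ := funext fun y => (hvx y).deriv
  have hvx2 : HasDerivAt (fun y => deriv ψ (σ * y + cc * t + s₀) * σ)
      (deriv (deriv ψ) (σ * x + cc * t + s₀) * σ * σ) x :=
    ((hψ'd _).hasDerivAt.comp x (haffx x)).mul_const σ
  refine ⟨by rw [mul_comm cc (deriv ψ (σ * x + cc * t + s₀))]; exact hvt, ?_, ?_⟩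
  · rw [hd1, hvx2.deriv, mul_assoc, hσ, mul_one]
  · have haff : ContDiff ℝ 2 (fun y : ℝ => σ * y + cc * t + s₀) :=
      ((contDiff_const.mul contDiff_id).add contDiff_const).add contDiff_const
    exact hψ.comp haff


/-- Nonnegativity of solutions with nonnegative initial data. -/
lemma sol_nonneg (d₁ d₂ r₁ r₂ b₁ b₂ : ℝ)
    (hd₁ : 0 < d₁) (hd₂ : 0 < d₂) (hr₁ : 0 < r₁) (hr₂ : 0 < r₂)
    (hb₁ : 0 < b₁) (hb₂ : 0 < b₂)
    (φ₁ φ₂ : ℝ → ℝ) (hφ₁ : ∀ x, 0 ≤ φ₁ x) (hφ₂ : ∀ x, 0 ≤ φ₂ x)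
    (u₁ u₂ : ℝ → ℝ → ℝ) (hu : IsLVSolution d₁ d₂ r₁ r₂ b₁ b₂ φ₁ φ₂ u₁ u₂) :
    ∀ t x : ℝ, 0 ≤ t → 0 ≤ u₁ t x ∧ 0 ≤ u₂ t x := by
  obtain ⟨M₁, hM₁⟩ := hu.reg1.bounded
  obtain ⟨M₂, hM₂⟩ := hu.reg2.bounded
  set M : ℝ := max M₁ M₂ with hMdef
  have hM0 : 0 ≤ M := le_trans (abs_nonneg _) (le_trans (hM₁ 0 0 le_rfl) (le_max_left _ _))
  have hMb₁ : ∀ t x : ℝ, 0 ≤ t → |u₁ t x| ≤ M :=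
    fun t x ht => le_trans (hM₁ t x ht) (le_max_left _ _)
  have hMb₂ : ∀ t x : ℝ, 0 ≤ t → |u₂ t x| ≤ M :=
    fun t x ht => le_trans (hM₂ t x ht) (le_max_right _ _)
  set L : ℝ := r₁ * (1 + M + b₁ * M) + r₂ * (1 + M + b₂ * M) with hLdef
  have hL0 : 0 ≤ L := by positivity
  intro t x ht
  have := comparison_principle d₁ d₂ L t M hd₁ hd₂ hL0 hM0 u₁ u₂
    (fun t x => r₁ * (1 - u₁ t x + b₁ * u₂ t x))
    (fun t x => r₂ * (1 - u₂ t x + b₂ * u₁ t x))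
    (fun _ _ => 0) (fun _ _ => 0)
    (fun s hs y => hMb₁ s y hs.1) (fun s hs y => hMb₂ s y hs.1)
    (hu.reg1.unifCont.continuousOn.mono (prod_mono_left Icc_subset_Ici_self))
    (hu.reg2.unifCont.continuousOn.mono (prod_mono_left Icc_subset_Ici_self))
    (fun y s hs => ((hu.reg1.contT y).differentiableOn one_ne_zero).differentiableAt
      (Ioi_mem_nhds hs.1))
    (fun y s hs => ((hu.reg2.contT y).differentiableOn one_ne_zero).differentiableAt
      (Ioi_mem_nhds hs.1))
    (fun s hs => hu.reg1.contX s hs.1) (fun s hs => hu.reg2.contX s hs.1)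
    ?_ ?_ ?_ ?_ ?_ ?_ ?_ ?_
  · exact this t ⟨ht, le_rfl⟩ x
  · intro s hs y
    have h1 := abs_le.mp (hMb₁ s y hs.1.le)
    have h2 := abs_le.mp (hMb₂ s y hs.1.le)
    have habs : |1 - u₁ s y + b₁ * u₂ s y| ≤ 1 + M + b₁ * M := by
      rw [abs_le]
      constructor <;>
        nlinarith [mul_le_mul_of_nonneg_left h2.2 hb₁.le, mul_le_mul_of_nonneg_left h2.1 hb₁.le]
    show |r₁ * (1 - u₁ s y + b₁ * u₂ s y)| ≤ L
    rw [abs_mul, abs_of_pos hr₁]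
    have := mul_le_mul_of_nonneg_left habs hr₁.le
    nlinarith [mul_nonneg hr₂.le (by nlinarith [mul_nonneg hb₂.le hM0] : (0:ℝ) ≤ 1 + M + b₂ * M)]
  · intro s hs y
    have h1 := abs_le.mp (hMb₁ s y hs.1.le)
    have h2 := abs_le.mp (hMb₂ s y hs.1.le)
    have habs : |1 - u₂ s y + b₂ * u₁ s y| ≤ 1 + M + b₂ * M := by
      rw [abs_le]
      constructor <;>
        nlinarith [mul_le_mul_of_nonneg_left h1.2 hb₂.le, mul_le_mul_of_nonneg_left h1.1 hb₂.le]
    show |r₂ * (1 - u₂ s y + b₂ * u₁ s y)| ≤ L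
    rw [abs_mul, abs_of_pos hr₂]
    have := mul_le_mul_of_nonneg_left habs hr₂.le
    nlinarith [mul_nonneg hr₁.le (by nlinarith [mul_nonneg hb₁.le hM0] : (0:ℝ) ≤ 1 + M + b₁ * M)]
  · exact fun s _ y => ⟨le_rfl, hL0⟩
  · exact fun s _ y => ⟨le_rfl, hL0⟩
  · intro s hs y
    rw [hu.pde1 s y hs.1]
    apply le_of_eq; ring
  · intro s hs y
    rw [hu.pde2 s y hs.1]
    apply le_of_eq; ring
  · exact fun y => by rw [hu.init1 y]; exact hφ₁ y
  · exact fun y => by rw [hu.init2 y]; exact hφ₂ y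



set_option maxHeartbeats 1000000 in
/-- Comparison of the solution with a translate of the traveling wave. -/
lemma wave_comparison (d₁ d₂ r₁ r₂ b₁ b₂ c : ℝ)
    (hd₁ : 0 < d₁) (hd₂ : 0 < d₂) (hr₁ : 0 < r₁) (hr₂ : 0 < r₂)
    (hb₁ : 0 < b₁) (hb₂ : 0 < b₂)
    (ψ₁ ψ₂ : ℝ → ℝ) (hw : IsTravelingWave d₁ d₂ r₁ r₂ b₁ b₂ c ψ₁ ψ₂)
    (φ₁ φ₂ : ℝ → ℝ) (u₁ u₂ : ℝ → ℝ → ℝ)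
    (hu : IsLVSolution d₁ d₂ r₁ r₂ b₁ b₂ φ₁ φ₂ u₁ u₂)
    (hpos : ∀ t x : ℝ, 0 ≤ t → 0 ≤ u₁ t x ∧ 0 ≤ u₂ t x)
    (σ s₀ : ℝ) (hσ : σ * σ = 1)
    (hinit : ∀ x, φ₁ x ≤ ψ₁ (σ * x + s₀) ∧ φ₂ x ≤ ψ₂ (σ * x + s₀)) :
    ∀ t x : ℝ, 0 ≤ t →
      u₁ t x ≤ ψ₁ (σ * x + c * t + s₀) ∧ u₂ t x ≤ ψ₂ (σ * x + c * t + s₀) := by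
  obtain ⟨M₁, hM₁⟩ := hu.reg1.bounded
  obtain ⟨M₂, hM₂⟩ := hu.reg2.bounded
  obtain ⟨P₁, hP₁⟩ := hw.bdd1
  obtain ⟨P₂, hP₂⟩ := hw.bdd2
  set M : ℝ := max M₁ M₂ + max P₁ P₂ with hMdef
  have hMP₁ : ∀ s, ψ₁ s ≤ max P₁ P₂ := fun s => le_trans (hP₁ s) (le_max_left _ _)
  have hMP₂ : ∀ s, ψ₂ s ≤ max P₁ P₂ := fun s => le_trans (hP₂ s) (le_max_right _ _)
  have hP0 : 0 < max P₁ P₂ := lt_of_lt_of_le (hw.pos1 0) (hMP₁ 0)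
  have hMb₁ : ∀ t x : ℝ, 0 ≤ t → |u₁ t x| ≤ max M₁ M₂ :=
    fun t x ht => le_trans (hM₁ t x ht) (le_max_left _ _)
  have hMb₂ : ∀ t x : ℝ, 0 ≤ t → |u₂ t x| ≤ max M₁ M₂ :=
    fun t x ht => le_trans (hM₂ t x ht) (le_max_right _ _)
  have hMu0 : 0 ≤ max M₁ M₂ := le_trans (abs_nonneg _) (hMb₁ 0 0 le_rfl)
  have hM0 : 0 ≤ M := by rw [hMdef]; linarith
  have hvb₁ : ∀ s : ℝ, 0 < ψ₁ s ∧ ψ₁ s ≤ M := by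
    intro s
    refine ⟨hw.pos1 _, ?_⟩
    rw [hMdef]
    have := hMP₁ s
    linarith
  have hvb₂ : ∀ s : ℝ, 0 < ψ₂ s ∧ ψ₂ s ≤ M := by
    intro s
    refine ⟨hw.pos2 _, ?_⟩
    rw [hMdef]
    have := hMP₂ s
    linarith
  have hub₁ : ∀ t x : ℝ, 0 ≤ t → |u₁ t x| ≤ M := by
    intro t x ht
    rw [hMdef]
    have := hMb₁ t x ht
    linarith
  have hub₂ : ∀ t x : ℝ, 0 ≤ t → |u₂ t x| ≤ M := by
    intro t x ht
    rw [hMdef]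
    have := hMb₂ t x ht
    linarith
  set L : ℝ := r₁ * (1 + 2 * M + b₁ * M) + r₂ * (1 + 2 * M + b₂ * M)
    + r₁ * b₁ * M + r₂ * b₂ * M with hLdef
  have hL0 : 0 ≤ L := by positivity
  have hucont : Continuous (fun p : ℝ × ℝ => σ * p.2 + c * p.1 + s₀) := by fun_prop
  intro t x ht
  have key := comparison_principle d₁ d₂ L t (2 * M) hd₁ hd₂ hL0 (by linarith)
    (fun t x => ψ₁ (σ * x + c * t + s₀) - u₁ t x)
    (fun t x => ψ₂ (σ * x + c * t + s₀) - u₂ t x)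
    (fun t x => r₁ * (1 - ψ₁ (σ * x + c * t + s₀) - u₁ t x + b₁ * ψ₂ (σ * x + c * t + s₀)))
    (fun t x => r₂ * (1 - ψ₂ (σ * x + c * t + s₀) - u₂ t x + b₂ * ψ₁ (σ * x + c * t + s₀)))
    (fun t x => r₁ * b₁ * u₁ t x)
    (fun t x => r₂ * b₂ * u₂ t x)
    ?_ ?_ ?_ ?_ ?_ ?_ ?_ ?_ ?_ ?_ ?_ ?_ ?_ ?_ ?_ ?_
  · have h := key t ⟨ht, le_rfl⟩ x
    have h1 := h.1
    have h2 := h.2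
    constructor <;> linarith
  -- |w₁| ≤ 2M
  · intro s hs y
    have h1 := abs_le.mp (hub₁ s y hs.1)
    have h2 := hvb₁ (σ * y + c * s + s₀)
    rw [abs_le]
    constructor <;> linarith
  · intro s hs y
    have h1 := abs_le.mp (hub₂ s y hs.1)
    have h2 := hvb₂ (σ * y + c * s + s₀)
    rw [abs_le]
    constructor <;> linarith
  -- continuity
  · apply ContinuousOn.sub
    · exact (hw.smooth1.continuous.comp hucont).continuousOn
    · exact hu.reg1.unifCont.continuousOn.mono (prod_mono_left Icc_subset_Ici_self)
  · apply ContinuousOn.sub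
    · exact (hw.smooth2.continuous.comp hucont).continuousOn
    · exact hu.reg2.unifCont.continuousOn.mono (prod_mono_left Icc_subset_Ici_self)
  -- time differentiability
  · intro y s hs
    exact ((travel_derivs ψ₁ hw.smooth1 σ c s₀ hσ s y).1.differentiableAt).sub
      (((hu.reg1.contT y).differentiableOn one_ne_zero).differentiableAt (Ioi_mem_nhds hs.1))
  · intro y s hs
    exact ((travel_derivs ψ₂ hw.smooth2 σ c s₀ hσ s y).1.differentiableAt).sub
      (((hu.reg2.contT y).differentiableOn one_ne_zero).differentiableAt (Ioi_mem_nhds hs.1))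
  -- space regularity
  · intro s hs
    exact ((travel_derivs ψ₁ hw.smooth1 σ c s₀ hσ s 0).2.2).sub (hu.reg1.contX s hs.1)
  · intro s hs
    exact ((travel_derivs ψ₂ hw.smooth2 σ c s₀ hσ s 0).2.2).sub (hu.reg2.contX s hs.1)
  -- coefficient bound a₁
  · intro s hs y
    have h1 := abs_le.mp (hub₁ s y hs.1.le)
    have hv1 := hvb₁ (σ * y + c * s + s₀)
    have hv2 := hvb₂ (σ * y + c * s + s₀)
    have habs : |1 - ψ₁ (σ * y + c * s + s₀) - u₁ s y + b₁ * ψ₂ (σ * y + c * s + s₀)|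
        ≤ 1 + 2 * M + b₁ * M := by
      rw [abs_le]
      constructor <;>
        nlinarith [mul_le_mul_of_nonneg_left hv2.2 hb₁.le, mul_pos hb₁ hv2.1]
    show |r₁ * (1 - ψ₁ (σ * y + c * s + s₀) - u₁ s y + b₁ * ψ₂ (σ * y + c * s + s₀))| ≤ L
    rw [abs_mul, abs_of_pos hr₁]
    have := mul_le_mul_of_nonneg_left habs hr₁.le
    have hrest : 0 ≤ r₂ * (1 + 2 * M + b₂ * M) + r₁ * b₁ * M + r₂ * b₂ * M := by positivity
    rw [hLdef]; linarith
  · intro s hs y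
    have h1 := abs_le.mp (hub₂ s y hs.1.le)
    have hv1 := hvb₂ (σ * y + c * s + s₀)
    have hv2 := hvb₁ (σ * y + c * s + s₀)
    have habs : |1 - ψ₂ (σ * y + c * s + s₀) - u₂ s y + b₂ * ψ₁ (σ * y + c * s + s₀)|
        ≤ 1 + 2 * M + b₂ * M := by
      rw [abs_le]
      constructor <;>
        nlinarith [mul_le_mul_of_nonneg_left hv2.2 hb₂.le, mul_pos hb₂ hv2.1]
    show |r₂ * (1 - ψ₂ (σ * y + c * s + s₀) - u₂ s y + b₂ * ψ₁ (σ * y + c * s + s₀))| ≤ L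
    rw [abs_mul, abs_of_pos hr₂]
    have := mul_le_mul_of_nonneg_left habs hr₂.le
    have hrest : 0 ≤ r₁ * (1 + 2 * M + b₁ * M) + r₁ * b₁ * M + r₂ * b₂ * M := by positivity
    rw [hLdef]; linarith
  -- coefficient bounds c₁, c₂
  · intro s hs y
    have h1 := abs_le.mp (hub₁ s y hs.1.le)
    have h0 := (hpos s y hs.1.le).1
    refine ⟨by positivity, ?_⟩
    show r₁ * b₁ * u₁ s y ≤ L
    have : r₁ * b₁ * u₁ s y ≤ r₁ * b₁ * M := by nlinarith [mul_pos hr₁ hb₁]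
    have hrest : 0 ≤ r₁ * (1 + 2 * M + b₁ * M) + r₂ * (1 + 2 * M + b₂ * M) + r₂ * b₂ * M := by
      positivity
    rw [hLdef]; linarith
  · intro s hs y
    have h1 := abs_le.mp (hub₂ s y hs.1.le)
    have h0 := (hpos s y hs.1.le).2
    refine ⟨by positivity, ?_⟩
    show r₂ * b₂ * u₂ s y ≤ L
    have : r₂ * b₂ * u₂ s y ≤ r₂ * b₂ * M := by nlinarith [mul_pos hr₂ hb₂]
    have hrest : 0 ≤ r₁ * (1 + 2 * M + b₁ * M) + r₂ * (1 + 2 * M + b₂ * M) + r₁ * b₁ * M := by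
      positivity
    rw [hLdef]; linarith
  -- the differential equality for w₁
  · intro s hs y
    apply le_of_eq
    have hder₁ := travel_derivs ψ₁ hw.smooth1 σ c s₀ hσ s y
    have hder₂ := travel_derivs ψ₂ hw.smooth2 σ c s₀ hσ s y
    have hut : DifferentiableAt ℝ (fun r => u₁ r y) s :=
      ((hu.reg1.contT y).differentiableOn one_ne_zero).differentiableAt (Ioi_mem_nhds hs.1)
    have hux : ContDiff ℝ 2 (u₁ s) := hu.reg1.contX s hs.1
    have hvsd : Differentiable ℝ (fun z : ℝ => ψ₁ (σ * z + c * s + s₀)) :=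
      hder₁.2.2.differentiable two_ne_zero
    have huxd : Differentiable ℝ (u₁ s) := hux.differentiable two_ne_zero
    have hdvx : Differentiable ℝ (deriv (fun z : ℝ => ψ₁ (σ * z + c * s + s₀))) :=
      (hder₁.2.2.iterate_deriv' 1 1).differentiable one_ne_zero
    have hdux : Differentiable ℝ (deriv (u₁ s)) :=
      (hux.iterate_deriv' 1 1).differentiable one_ne_zero
    have hpdtw : pdT (fun t x => ψ₁ (σ * x + c * t + s₀) - u₁ t x) s y
        = c * deriv ψ₁ (σ * y + c * s + s₀) - pdT u₁ s y := by
      simp only [pdT]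
      rw [deriv_fun_sub hder₁.1.differentiableAt hut, hder₁.1.deriv]
    have hpdxw : pdXX (fun t x => ψ₁ (σ * x + c * t + s₀) - u₁ t x) s y
        = deriv (deriv ψ₁) (σ * y + c * s + s₀) - pdXX u₁ s y := by
      simp only [pdXX]
      have hd1 : deriv (fun z => ψ₁ (σ * z + c * s + s₀) - u₁ s z)
          = fun z => deriv (fun z' : ℝ => ψ₁ (σ * z' + c * s + s₀)) z - deriv (u₁ s) z :=
        funext fun z => deriv_sub (hvsd z) (huxd z)
      rw [hd1, deriv_fun_sub (hdvx y) (hdux y), hder₁.2.1]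
    rw [hpdtw, hpdxw, hu.pde1 s y hs.1]
    linear_combination hw.ode1 (σ * y + c * s + s₀)
  -- the differential equality for w₂
  · intro s hs y
    apply le_of_eq
    have hder₂ := travel_derivs ψ₂ hw.smooth2 σ c s₀ hσ s y
    have hut : DifferentiableAt ℝ (fun r => u₂ r y) s :=
      ((hu.reg2.contT y).differentiableOn one_ne_zero).differentiableAt (Ioi_mem_nhds hs.1)
    have hux : ContDiff ℝ 2 (u₂ s) := hu.reg2.contX s hs.1
    have hvsd : Differentiable ℝ (fun z : ℝ => ψ₂ (σ * z + c * s + s₀)) :=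
      hder₂.2.2.differentiable two_ne_zero
    have huxd : Differentiable ℝ (u₂ s) := hux.differentiable two_ne_zero
    have hdvx : Differentiable ℝ (deriv (fun z : ℝ => ψ₂ (σ * z + c * s + s₀))) :=
      (hder₂.2.2.iterate_deriv' 1 1).differentiable one_ne_zero
    have hdux : Differentiable ℝ (deriv (u₂ s)) :=
      (hux.iterate_deriv' 1 1).differentiable one_ne_zero
    have hpdtw : pdT (fun t x => ψ₂ (σ * x + c * t + s₀) - u₂ t x) s y
        = c * deriv ψ₂ (σ * y + c * s + s₀) - pdT u₂ s y := by
      simp only [pdT]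
      rw [deriv_fun_sub hder₂.1.differentiableAt hut, hder₂.1.deriv]
    have hpdxw : pdXX (fun t x => ψ₂ (σ * x + c * t + s₀) - u₂ t x) s y
        = deriv (deriv ψ₂) (σ * y + c * s + s₀) - pdXX u₂ s y := by
      simp only [pdXX]
      have hd1 : deriv (fun z => ψ₂ (σ * z + c * s + s₀) - u₂ s z)
          = fun z => deriv (fun z' : ℝ => ψ₂ (σ * z' + c * s + s₀)) z - deriv (u₂ s) z :=
        funext fun z => deriv_sub (hvsd z) (huxd z)
      rw [hd1, deriv_fun_sub (hdvx y) (hdux y), hder₂.2.1]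
    rw [hpdtw, hpdxw, hu.pde2 s y hs.1]
    linear_combination hw.ode2 (σ * y + c * s + s₀)
  -- initial data
  · intro y
    have h0 := (hinit y).1
    have hz : σ * y + c * 0 + s₀ = σ * y + s₀ := by ring
    rw [hz, hu.init1 y]
    linarith
  · intro y
    have h0 := (hinit y).2
    have hz : σ * y + c * 0 + s₀ = σ * y + s₀ := by ring
    rw [hz, hu.init2 y]
    linarith


/-- If `u` is nonnegative and dominated by translates of a profile vanishing at `-∞`,
then the sup over `|x| ≥ (c+ε)t` tends to `0`. -/
lemma sup_tendsto_zero (u : ℝ → ℝ → ℝ) (ψ : ℝ → ℝ) (c ε s₀ : ℝ) (hε : 0 < ε)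
    (hψlim : Tendsto ψ atBot (𝓝 0))
    (hupos : ∀ t x : ℝ, 0 ≤ t → 0 ≤ u t x)
    (hbndR : ∀ t x : ℝ, 0 ≤ t → u t x ≤ ψ (-x + c * t + s₀))
    (hbndL : ∀ t x : ℝ, 0 ≤ t → u t x ≤ ψ (x + c * t + s₀)) :
    Tendsto (fun t => sSup (u t '' {x : ℝ | (c + ε) * t ≤ |x|})) atTop (𝓝 0) := by
  rw [Metric.tendsto_atTop]
  intro δ hδ
  obtain ⟨Y, hY⟩ := eventually_atBot.mp (hψlim.eventually_lt_const (half_pos hδ))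
  refine ⟨max 1 ((s₀ - Y) / ε + 1), fun t ht => ?_⟩
  have ht1 : (1:ℝ) ≤ t := le_trans (le_max_left _ _) ht
  have ht0 : 0 ≤ t := by linarith
  have hty : -(ε * t) + s₀ ≤ Y := by
    have h2 : (s₀ - Y) / ε + 1 ≤ t := le_trans (le_max_right _ _) ht
    have h3 : (s₀ - Y) / ε < t := by linarith
    have := (div_lt_iff₀ hε).mp h3
    linarith
  have hub : ∀ y ∈ u t '' {x : ℝ | (c + ε) * t ≤ |x|}, y ≤ δ / 2 := by
    rintro y ⟨x, hx, rfl⟩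
    simp only [mem_setOf_eq] at hx
    rcases le_total 0 x with h | h
    · have hx' : (c + ε) * t ≤ x := by rwa [abs_of_nonneg h] at hx
      have harg : -x + c * t + s₀ ≤ Y := by nlinarith
      exact le_trans (hbndR t x ht0) (hY _ harg).le
    · have hx' : (c + ε) * t ≤ -x := by rwa [abs_of_nonpos h] at hx
      have harg : x + c * t + s₀ ≤ Y := by nlinarith
      exact le_trans (hbndL t x ht0) (hY _ harg).le
  set x₀ : ℝ := |(c + ε) * t| + 1 with hx₀def
  have hx₀mem : x₀ ∈ {x : ℝ | (c + ε) * t ≤ |x|} := by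
    have h1 : 0 ≤ |(c + ε) * t| := abs_nonneg _
    have h2 : |x₀| = x₀ := abs_of_nonneg (by rw [hx₀def]; linarith)
    rw [mem_setOf_eq, h2, hx₀def]
    have := le_abs_self ((c + ε) * t)
    linarith
  have hmem : u t x₀ ∈ u t '' {x : ℝ | (c + ε) * t ≤ |x|} := ⟨x₀, hx₀mem, rfl⟩
  have hbdd : BddAbove (u t '' {x : ℝ | (c + ε) * t ≤ |x|}) := ⟨δ / 2, fun y hy => hub y hy⟩
  have hsup_le : sSup (u t '' {x : ℝ | (c + ε) * t ≤ |x|}) ≤ δ / 2 :=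
    Real.sSup_le hub (by linarith)
  have hsup_ge : 0 ≤ sSup (u t '' {x : ℝ | (c + ε) * t ≤ |x|}) :=
    le_trans (hupos t x₀ ht0) (le_csSup hbdd hmem)
  rw [Real.dist_eq]
  rw [abs_of_nonneg (by linarith)]
  linarith


/-- Proposition 3.9: if a traveling wave with speed `c` connecting `(0,0)` with `(k₁,k₂)`
exists, then the spreading speeds of solutions with compactly supported initial data are
at most `c`. -/
theorem wave_speed_bounds_spreading
    (d₁ d₂ r₁ r₂ b₁ b₂ : ℝ)
    (hd₁ : 0 < d₁) (hd₂ : 0 < d₂) (hr₁ : 0 < r₁) (hr₂ : 0 < r₂)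
    (hb₁ : 0 < b₁) (hb₂ : 0 < b₂) (hbb : b₁ * b₂ < 1)
    (c : ℝ) (ψ₁ ψ₂ : ℝ → ℝ)
    (hw : IsTravelingWave d₁ d₂ r₁ r₂ b₁ b₂ c ψ₁ ψ₂)
    (φ₁ φ₂ : ℝ → ℝ) (hφ₁c : Continuous φ₁) (hφ₂c : Continuous φ₂)
    (hφ₁supp : HasCompactSupport φ₁) (hφ₂supp : HasCompactSupport φ₂)
    (hφ₁ : ∀ x, 0 ≤ φ₁ x ∧ φ₁ x < (1 + b₁) / (1 - b₁ * b₂))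
    (hφ₂ : ∀ x, 0 ≤ φ₂ x ∧ φ₂ x < (1 + b₂) / (1 - b₁ * b₂))
    (u₁ u₂ : ℝ → ℝ → ℝ)
    (hu : IsLVSolution d₁ d₂ r₁ r₂ b₁ b₂ φ₁ φ₂ u₁ u₂)
    (ε : ℝ) (hε : 0 < ε) :
    Tendsto (fun t => sSup (u₁ t '' {x : ℝ | (c + ε) * t ≤ |x|})) atTop (𝓝 0) ∧
    Tendsto (fun t => sSup (u₂ t '' {x : ℝ | (c + ε) * t ≤ |x|})) atTop (𝓝 0) := by
  have hpos : ∀ t x : ℝ, 0 ≤ t → 0 ≤ u₁ t x ∧ 0 ≤ u₂ t x :=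
    sol_nonneg d₁ d₂ r₁ r₂ b₁ b₂ hd₁ hd₂ hr₁ hr₂ hb₁ hb₂ φ₁ φ₂
      (fun x => (hφ₁ x).1) (fun x => (hφ₂ x).1) u₁ u₂ hu
  obtain ⟨x₁s, hx₁s⟩ := hφ₁c.exists_forall_ge_of_hasCompactSupport hφ₁supp
  obtain ⟨x₂s, hx₂s⟩ := hφ₂c.exists_forall_ge_of_hasCompactSupport hφ₂supp
  obtain ⟨Y₁, hY₁⟩ := eventually_atTop.mp (hw.limPos1.eventually_const_lt (hφ₁ x₁s).2)
  obtain ⟨Y₂, hY₂⟩ := eventually_atTop.mp (hw.limPos2.eventually_const_lt (hφ₂ x₂s).2)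
  have hcomp : IsCompact (tsupport φ₁ ∪ tsupport φ₂) := hφ₁supp.union hφ₂supp
  obtain ⟨r, hr⟩ := hcomp.isBounded.subset_closedBall 0
  set B : ℝ := max r 0 with hBdef
  have hBmem : ∀ z ∈ tsupport φ₁ ∪ tsupport φ₂, |z| ≤ B := by
    intro z hz
    have h1 := hr hz
    rw [Metric.mem_closedBall, Real.dist_0_eq_abs] at h1
    exact le_trans h1 (le_max_left _ _)
  set s₀ : ℝ := max Y₁ Y₂ + B with hs₀def
  have hinit : ∀ σ : ℝ, σ = 1 ∨ σ = -1 →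
      ∀ x : ℝ, φ₁ x ≤ ψ₁ (σ * x + s₀) ∧ φ₂ x ≤ ψ₂ (σ * x + s₀) := by
    intro σ hσ x
    have hσx : |σ * x| = |x| := by
      rcases hσ with rfl | rfl <;> simp
    constructor
    · by_cases hx : x ∈ tsupport φ₁
      · have hxB : |x| ≤ B := hBmem x (Or.inl hx)
        have hax : -B ≤ σ * x := by
          have := neg_abs_le (σ * x)
          rw [hσx] at this
          linarith
        have harg : Y₁ ≤ σ * x + s₀ := by
          have := le_max_left Y₁ Y₂
          rw [hs₀def]
          linarith
        exact le_trans (hx₁s x) (hY₁ _ harg).le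
      · rw [image_eq_zero_of_notMem_tsupport hx]
        exact (hw.pos1 _).le
    · by_cases hx : x ∈ tsupport φ₂
      · have hxB : |x| ≤ B := hBmem x (Or.inr hx)
        have hax : -B ≤ σ * x := by
          have := neg_abs_le (σ * x)
          rw [hσx] at this
          linarith
        have harg : Y₂ ≤ σ * x + s₀ := by
          have := le_max_right Y₁ Y₂
          rw [hs₀def]
          linarith
        exact le_trans (hx₂s x) (hY₂ _ harg).le
      · rw [image_eq_zero_of_notMem_tsupport hx]
        exact (hw.pos2 _).le
  have hcR := wave_comparison d₁ d₂ r₁ r₂ b₁ b₂ c hd₁ hd₂ hr₁ hr₂ hb₁ hb₂ ψ₁ ψ₂ hw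
    φ₁ φ₂ u₁ u₂ hu hpos 1 s₀ (by norm_num) (hinit 1 (Or.inl rfl))
  have hcL := wave_comparison d₁ d₂ r₁ r₂ b₁ b₂ c hd₁ hd₂ hr₁ hr₂ hb₁ hb₂ ψ₁ ψ₂ hw
    φ₁ φ₂ u₁ u₂ hu hpos (-1) s₀ (by norm_num) (hinit (-1) (Or.inr rfl))
  constructor
  · apply sup_tendsto_zero u₁ ψ₁ c ε s₀ hε hw.limNeg1 (fun t x ht => (hpos t x ht).1)
    · intro t x ht
      have h := (hcL t x ht).1
      rwa [neg_one_mul] at h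
    · intro t x ht
      have h := (hcR t x ht).1
      rwa [one_mul] at h
  · apply sup_tendsto_zero u₂ ψ₂ c ε s₀ hε hw.limNeg2 (fun t x ht => (hpos t x ht).2)
    · intro t x ht
      have h := (hcL t x ht).2
      rwa [neg_one_mul] at h
    · intro t x ht
      have h := (hcR t x ht).2
      rwa [one_mul] at h
end

section
/- If c < 2√(d₁r₁), then the Lotka–Volterra cooperative system admits no traveling wave solution connecting (0,0) with (k₁, k₂) with speed c; that is, there is no pair of positive, bounded, uniformly continuous, twice continuously differentiable functions ψ₁, ψ₂ : ℝ → ℝ satisfying d₁ψ₁'' − cψ₁' + r₁ψ₁(1 − ψ₁ + b₁ψ₂) = 0 and d₂ψ₂'' − cψ₂' + r₂ψ₂(1 − ψ₂ + b₂ψ₁) = 0 on ℝ together with ψ₁(s), ψ₂(s) → 0 as s → −∞ and ψ₁(s) → k₁, ψ₂(s) → k₂ as s → +∞. -/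
open Real Set Filter Topology


lemma deriv_diff_of_contDiff2 {ψ : ℝ → ℝ} (h : ContDiff ℝ 2 ψ) :
    Differentiable ℝ (deriv ψ) := by
  have h2 : ContDiff ℝ ((1:WithTop ℕ∞) + 1) ψ := by norm_num at h ⊢; exact h
  exact ((contDiff_succ_iff_deriv.mp h2).2.2).differentiable one_ne_zero

lemma neg_speed_aux (d c : ℝ) (hd : 0 < d) (hc : c ≤ 0)
    (ψ q : ℝ → ℝ) (hψ : ContDiff ℝ 2 ψ) (hpos : ∀ s, 0 < ψ s)
    (s₀ : ℝ) (hq : ∀ s ≤ s₀, 0 < q s)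
    (hode : ∀ s, d * deriv (deriv ψ) s - c * deriv ψ s + q s * ψ s = 0)
    (hlim : Tendsto ψ atBot (𝓝 0)) : False := by
  have hψ1 : Differentiable ℝ ψ := hψ.differentiable (by norm_num)
  have hψ2 : Differentiable ℝ (deriv ψ) := deriv_diff_of_contDiff2 hψ
  set g : ℝ → ℝ := fun s => d * deriv ψ s - c * ψ s with hg
  have hgd : ∀ s, HasDerivAt g (d * deriv (deriv ψ) s - c * deriv ψ s) s := by
    intro s
    exact ((hψ2 s).hasDerivAt.const_mul d).sub ((hψ1 s).hasDerivAt.const_mul c)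
  have hgderiv : ∀ s, deriv g s = d * deriv (deriv ψ) s - c * deriv ψ s :=
    fun s => (hgd s).deriv
  have hgcont : Continuous g :=
    (continuous_const.mul hψ2.continuous).sub (continuous_const.mul hψ1.continuous)
  have hganti : StrictAntiOn g (Iic s₀) := by
    apply strictAntiOn_of_deriv_neg (convex_Iic s₀) hgcont.continuousOn
    intro x hx
    rw [interior_Iic] at hx
    rw [hgderiv x]
    have := hode x
    have hqx := hq x (le_of_lt hx)
    nlinarith [hpos x]
  by_cases hall : ∀ s ≤ s₀, g s < 0
  · -- ψ strictly decreasing on Iic s₀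
    have hψanti : StrictAntiOn ψ (Iic s₀) := by
      apply strictAntiOn_of_deriv_neg (convex_Iic s₀) hψ1.continuous.continuousOn
      intro x hx
      rw [interior_Iic] at hx
      have hgx := hall x (le_of_lt hx)
      have hcψ : c * ψ x ≤ 0 := mul_nonpos_of_nonpos_of_nonneg hc (hpos x).le
      have : d * deriv ψ x < 0 := by simp only [hg] at hgx; linarith
      nlinarith
    have hev : ∀ᶠ s in atBot, ψ s < ψ s₀ := hlim.eventually_lt_const (hpos s₀)
    obtain ⟨s₄, hs₄⟩ := eventually_atBot.mp hev
    set s := min s₄ (s₀ - 1) with hs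
    have h1 : ψ s < ψ s₀ := hs₄ s (min_le_left _ _)
    have h2 : s < s₀ := lt_of_le_of_lt (min_le_right _ _) (by linarith)
    have := hψanti (le_of_lt h2 : s ∈ Iic s₀) (le_refl s₀ : s₀ ∈ Iic s₀) h2
    linarith
  · push_neg at hall
    obtain ⟨s₁, hs₁, hgs₁⟩ := hall
    obtain ⟨δ, hδpos, hglb⟩ : ∃ δ : ℝ, 0 < δ ∧ ∀ s ≤ s₁ - 1, δ ≤ g s := by
      refine ⟨g (s₁ - 1), ?_, ?_⟩
      · have := hganti (by simp only [Set.mem_Iic]; linarith : s₁ - 1 ∈ Iic s₀) hs₁ (by linarith)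
        linarith
      · intro s hsle
        rcases eq_or_lt_of_le hsle with h | h
        · rw [h]
        · exact le_of_lt (hganti (by simp only [Set.mem_Iic]; linarith)
            (by simp only [Set.mem_Iic]; linarith) h)
    -- eventually ψ small so c * ψ s ≥ -δ/2
    have hev : ∀ᶠ s in atBot, ψ s < δ / (2 * (1 - c)) := by
      apply hlim.eventually_lt_const
      exact div_pos hδpos (by nlinarith)
    obtain ⟨s₄, hs₄⟩ := eventually_atBot.mp hev
    set s₃ := min s₄ (s₁ - 1) with hs₃
    have hder : ∀ s ≤ s₃, δ / (2 * d) ≤ deriv ψ s := by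
      intro s hsle
      have h1 : δ ≤ g s := hglb s (le_trans hsle (min_le_right _ _))
      have h2 : ψ s < δ / (2 * (1 - c)) := hs₄ s (le_trans hsle (min_le_left _ _))
      have h3 : -c * ψ s ≤ (1 - c) * ψ s := by nlinarith [hpos s]
      have h4 : (1 - c) * ψ s < δ / 2 := by
        have h1c : (0:ℝ) < 1 - c := by linarith
        rw [div_mul_eq_div_div] at h2
        calc (1 - c) * ψ s < (1 - c) * (δ / 2 / (1 - c)) := by
              apply mul_lt_mul_of_pos_left _ h1c
              linarith [h2]
          _ = δ / 2 := by field_simp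
      have h1' : δ ≤ d * deriv ψ s - c * ψ s := by simpa [hg] using h1
      have h6 : δ / 2 ≤ d * deriv ψ s := by linarith [(hpos s).le]
      rw [div_le_iff₀ (by positivity : (0:ℝ) < 2 * d)]
      nlinarith
    -- ψ grows linearly going left: contradiction
    set m := δ / (2 * d) with hm
    have hmpos : 0 < m := by positivity
    set h : ℝ → ℝ := fun s => ψ s - m * s with hh
    have hmono : MonotoneOn h (Iic s₃) := by
      apply monotoneOn_of_deriv_nonneg (convex_Iic s₃)
        (by fun_prop : Continuous h).continuousOn
      · intro x hx
        exact ((hψ1 x).sub ((differentiable_id.const_mul m) x)).differentiableWithinAt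
      · intro x hx
        rw [interior_Iic] at hx
        have : HasDerivAt h (deriv ψ x - m) x := by
          have := (hψ1 x).hasDerivAt.sub ((hasDerivAt_id' x).const_mul m)
          simp only [mul_one] at this
          exact this
        rw [this.deriv]
        linarith [hder x hx.le]
    have hX : 0 < (ψ s₃ + 1) / m := div_pos (by linarith [hpos s₃]) hmpos
    have key : ∀ s ≤ s₃, ψ s ≤ ψ s₃ + m * (s - s₃) := by
      intro s hs
      have := hmono (hs : s ∈ Iic s₃) (le_refl s₃ : s₃ ∈ Iic s₃) hs
      simp only [hh] at this
      nlinarith [this]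
    have h9 := key (s₃ - (ψ s₃ + 1) / m) (by linarith)
    have hmX : m * ((s₃ - (ψ s₃ + 1) / m) - s₃) = -(ψ s₃ + 1) := by
      field_simp
      ring
    linarith [hpos (s₃ - (ψ s₃ + 1) / m), hmX, h9]


lemma deriv_diff_of_contDiff2' {ψ : ℝ → ℝ} (h : ContDiff ℝ 2 ψ) :
    Differentiable ℝ (deriv ψ) := by
  have h2 : ContDiff ℝ ((1:WithTop ℕ∞) + 1) ψ := by norm_num at h ⊢; exact h
  exact ((contDiff_succ_iff_deriv.mp h2).2.2).differentiable one_ne_zero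

lemma sturm_aux (d c r : ℝ) (hd : 0 < d) (hr : 0 < r) (hdisc : c^2 < 4*d*r)
    (ψ q : ℝ → ℝ) (hψ : ContDiff ℝ 2 ψ) (hpos : ∀ s, 0 < ψ s)
    (a b : ℝ) (hb : b = a + π / (Real.sqrt (4*d*r - c^2) / (2*d)))
    (hq : ∀ s ∈ Icc a b, r ≤ q s)
    (hode : ∀ s, d * deriv (deriv ψ) s - c * deriv ψ s + q s * ψ s = 0) :
    False := by
  have hψ1 : Differentiable ℝ ψ := hψ.differentiable (by norm_num)
  have hψ2 : Differentiable ℝ (deriv ψ) := deriv_diff_of_contDiff2' hψ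
  obtain ⟨β, hβ⟩ : ∃ β : ℝ, c = 2*d*β := ⟨c/(2*d), by field_simp⟩
  obtain ⟨α, hαpos, hα2, hb'⟩ :
      ∃ α : ℝ, 0 < α ∧ d*α^2 + d*β^2 = r ∧ b = a + π/α := by
    refine ⟨Real.sqrt (4*d*r - c^2) / (2*d),
      div_pos (Real.sqrt_pos.mpr (by nlinarith)) (by linarith), ?_, hb⟩
    have h1 : Real.sqrt (4*d*r - c^2) ^ 2 = 4*d*r - c^2 :=
      Real.sq_sqrt (by nlinarith)
    rw [div_pow, h1, hβ]
    field_simp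
    ring
  clear hb hdisc
  have hab : a < b := by
    rw [hb']
    linarith [div_pos Real.pi_pos hαpos]
  -- explicit comparison function and its derivatives
  set v : ℝ → ℝ := fun s => Real.exp (β*s) * Real.sin (α*(s-a)) with hv
  set v1 : ℝ → ℝ := fun s => Real.exp (β*s) *
      (β * Real.sin (α*(s-a)) + α * Real.cos (α*(s-a))) with hv1
  have hE : ∀ s : ℝ, HasDerivAt (fun x => Real.exp (β*x)) (Real.exp (β*s) * β) s := by
    intro s
    simpa using ((hasDerivAt_id s).const_mul β).exp
  have hlin : ∀ s : ℝ, HasDerivAt (fun x => α*(x-a)) α s := by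
    intro s
    simpa using ((hasDerivAt_id s).sub_const a).const_mul α
  have hsn : ∀ s : ℝ, HasDerivAt (fun x => Real.sin (α*(x-a)))
      (Real.cos (α*(s-a)) * α) s := fun s => (hlin s).sin
  have hcs : ∀ s : ℝ, HasDerivAt (fun x => Real.cos (α*(x-a)))
      (-Real.sin (α*(s-a)) * α) s := fun s => (hlin s).cos
  have hvd : ∀ s : ℝ, HasDerivAt v (v1 s) s := by
    intro s
    have h := (hE s).mul (hsn s)
    refine h.congr_deriv ?_
    simp only [hv1]
    ring
  have hv1d : ∀ s : ℝ, HasDerivAt v1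
      (Real.exp (β*s) * ((β^2 - α^2) * Real.sin (α*(s-a)) + 2*β*α*Real.cos (α*(s-a)))) s := by
    intro s
    have hin : HasDerivAt (fun x => β * Real.sin (α*(x-a)) + α * Real.cos (α*(x-a)))
        (β * (Real.cos (α*(s-a)) * α) + α * (-Real.sin (α*(s-a)) * α)) s :=
      ((hsn s).const_mul β).add ((hcs s).const_mul α)
    have h := (hE s).mul hin
    refine h.congr_deriv ?_
    ring
  -- the Wronskian-type function
  set W : ℝ → ℝ := fun s => Real.exp (-(2*β)*s) * (ψ s * v1 s - deriv ψ s * v s) with hW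
  have hF : ∀ s : ℝ, HasDerivAt (fun x => Real.exp (-(2*β)*x))
      (Real.exp (-(2*β)*s) * (-(2*β))) s := by
    intro s
    simpa using ((hasDerivAt_id s).const_mul (-(2*β))).exp
  have hWd : ∀ s : ℝ, HasDerivAt W
      (Real.exp (-(2*β)*s) * (-(2*β)) * (ψ s * v1 s - deriv ψ s * v s)
        + Real.exp (-(2*β)*s) *
          ((deriv ψ s * v1 s + ψ s * (Real.exp (β*s) * ((β^2 - α^2) * Real.sin (α*(s-a)) + 2*β*α*Real.cos (α*(s-a)))))
           - (deriv (deriv ψ) s * v s + deriv ψ s * v1 s))) s := by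
    intro s
    exact (hF s).mul (((hψ1 s).hasDerivAt.mul (hv1d s)).sub
      ((hψ2 s).hasDerivAt.mul (hvd s)))
  -- the derivative of W equals a manifestly signed expression
  have hWd_eq : ∀ s : ℝ,
      Real.exp (-(2*β)*s) * (-(2*β)) * (ψ s * v1 s - deriv ψ s * v s)
        + Real.exp (-(2*β)*s) *
          ((deriv ψ s * v1 s + ψ s * (Real.exp (β*s) * ((β^2 - α^2) * Real.sin (α*(s-a)) + 2*β*α*Real.cos (α*(s-a)))))
           - (deriv (deriv ψ) s * v s + deriv ψ s * v1 s))
      = Real.exp (-(2*β)*s) * Real.exp (β*s) * Real.sin (α*(s-a)) * ψ s * (q s - r) / d := by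
    intro s
    have hode' : d * deriv (deriv ψ) s - 2*d*β * deriv ψ s + q s * ψ s = 0 := by
      have := hode s
      rw [hβ] at this
      linarith
    rw [eq_div_iff hd.ne']
    simp only [hv, hv1]
    linear_combination (-(Real.exp (-(2*β)*s) * Real.exp (β*s) * Real.sin (α*(s-a)))) * hode'
      + (-(Real.exp (-(2*β)*s) * Real.exp (β*s) * Real.sin (α*(s-a)) * ψ s)) * hα2
  have hWdiff : Differentiable ℝ W := fun s => (hWd s).differentiableAt
  have hWmono : MonotoneOn W (Icc a b) := by
    apply monotoneOn_of_deriv_nonneg (convex_Icc a b) hWdiff.continuous.continuousOn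
    · intro x hx
      exact (hWdiff x).differentiableWithinAt
    · intro x hx
      rw [interior_Icc] at hx
      rw [(hWd x).deriv, hWd_eq x]
      apply div_nonneg _ hd.le
      have hsin : 0 ≤ Real.sin (α*(x-a)) := by
        apply Real.sin_nonneg_of_nonneg_of_le_pi
        · exact mul_nonneg hαpos.le (by linarith [hx.1])
        · have hxb : x - a ≤ π / α := by
            have := hx.2
            rw [hb'] at this
            linarith
          calc α * (x-a) ≤ α * (π / α) := by
                exact mul_le_mul_of_nonneg_left hxb hαpos.le
            _ = π := by field_simp
      have hq' : r ≤ q x := hq x ⟨hx.1.le, hx.2.le⟩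
      have e1 : (0:ℝ) ≤ Real.exp (-(2*β)*x) * Real.exp (β*x) :=
        (mul_pos (Real.exp_pos _) (Real.exp_pos _)).le
      have h3 := (hpos x).le
      have h4 : (0:ℝ) ≤ q x - r := by linarith
      exact mul_nonneg (mul_nonneg (mul_nonneg e1 hsin) h3) h4
  have hWab : W a ≤ W b := hWmono ⟨le_refl a, hab.le⟩ ⟨hab.le, le_refl b⟩ hab.le
  have hWa : 0 < W a := by
    have hsa : α * (a - a) = 0 := by ring
    simp only [hW, hv, hv1, hsa, Real.sin_zero, Real.cos_zero]
    have h1 := Real.exp_pos (-(2*β)*a)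
    have h2 := Real.exp_pos (β*a)
    have h3 := hpos a
    nlinarith [mul_pos (mul_pos h1 h3) (mul_pos h2 hαpos)]
  have hWb : W b < 0 := by
    have hsb : α * (b - a) = π := by
      rw [hb']
      field_simp
      ring
    simp only [hW, hv, hv1, hsb, Real.sin_pi, Real.cos_pi]
    have h1 := Real.exp_pos (-(2*β)*b)
    have h2 := Real.exp_pos (β*b)
    have h3 := hpos b
    nlinarith [mul_pos (mul_pos h1 h3) (mul_pos h2 hαpos)]
  linarith

/-- Proposition 3.10 (nonexistence part): for `c < 2√(d₁r₁)` there is no traveling wave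
solution connecting `(0,0)` with `(k₁,k₂)`. -/
theorem no_slow_traveling_wave
    (d₁ d₂ r₁ r₂ b₁ b₂ : ℝ)
    (hd₁ : 0 < d₁) (hd₂ : 0 < d₂) (hr₁ : 0 < r₁) (hr₂ : 0 < r₂)
    (hb₁ : 0 < b₁) (hb₂ : 0 < b₂) (hbb : b₁ * b₂ < 1)
    (c : ℝ) (hc : c < 2 * Real.sqrt (d₁ * r₁)) :
    ¬ ∃ ψ₁ ψ₂ : ℝ → ℝ,
      (∀ s, 0 < ψ₁ s) ∧ (∀ s, 0 < ψ₂ s) ∧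
      (∃ M, ∀ s, ψ₁ s ≤ M) ∧ (∃ M, ∀ s, ψ₂ s ≤ M) ∧
      UniformContinuous ψ₁ ∧ UniformContinuous ψ₂ ∧
      ContDiff ℝ 2 ψ₁ ∧ ContDiff ℝ 2 ψ₂ ∧
      (∀ s : ℝ, d₁ * deriv (deriv ψ₁) s - c * deriv ψ₁ s
        + r₁ * ψ₁ s * (1 - ψ₁ s + b₁ * ψ₂ s) = 0) ∧
      (∀ s : ℝ, d₂ * deriv (deriv ψ₂) s - c * deriv ψ₂ s
        + r₂ * ψ₂ s * (1 - ψ₂ s + b₂ * ψ₁ s) = 0) ∧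
      Tendsto ψ₁ atBot (𝓝 0) ∧ Tendsto ψ₂ atBot (𝓝 0) ∧
      Tendsto ψ₁ atTop (𝓝 ((1 + b₁) / (1 - b₁ * b₂))) ∧
      Tendsto ψ₂ atTop (𝓝 ((1 + b₂) / (1 - b₁ * b₂))) := by
  rintro ⟨ψ₁, ψ₂, h01, h02, -, -, -, -, hC1, -, hode1, -, hlim1, -, -, -⟩
  set q : ℝ → ℝ := fun s => r₁ * (1 - ψ₁ s + b₁ * ψ₂ s) with hqdef
  have hode : ∀ s, d₁ * deriv (deriv ψ₁) s - c * deriv ψ₁ s + q s * ψ₁ s = 0 := by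
    intro s
    have h := hode1 s
    have : q s * ψ₁ s = r₁ * ψ₁ s * (1 - ψ₁ s + b₁ * ψ₂ s) := by
      simp only [hqdef]; ring
    linarith
  rcases le_or_gt c 0 with hcneg | hcpos
  · -- use the monotonicity argument
    obtain ⟨s₀, hs₀⟩ := eventually_atBot.mp (hlim1.eventually_lt_const one_pos)
    refine neg_speed_aux d₁ c hd₁ hcneg ψ₁ q hC1 h01 s₀ ?_ hode hlim1
    intro s hs
    have h1 := hs₀ s hs
    have h2 := mul_pos hb₁ (h02 s)
    simp only [hqdef]
    apply mul_pos hr₁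
    linarith
  · -- Sturm comparison argument
    have hsq : Real.sqrt (d₁ * r₁) ^ 2 = d₁ * r₁ :=
      Real.sq_sqrt (mul_pos hd₁ hr₁).le
    have hcsq : c ^ 2 < 4 * d₁ * r₁ := by
      nlinarith [Real.sqrt_nonneg (d₁ * r₁)]
    set r' : ℝ := (c^2/(4*d₁) + r₁)/2 with hr'def
    have hr'pos : 0 < r' := by
      simp only [hr'def]; positivity
    have h4dr' : 4 * d₁ * r' = c^2/2 + 2*d₁*r₁ := by
      simp only [hr'def]; field_simp; ring
    have hdisc : c^2 < 4 * d₁ * r' := by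
      rw [h4dr']; linarith
    have hr'lt : r' < r₁ := by
      have h5 : c^2/(4*d₁) < r₁ := by
        rw [div_lt_iff₀ (by linarith : (0:ℝ) < 4*d₁)]
        nlinarith
      simp only [hr'def]
      linarith
    set ε : ℝ := (r₁ - r') / r₁ with hεdef
    have hεpos : 0 < ε := div_pos (by linarith) hr₁
    have hε : r₁ * ε = r₁ - r' := by
      simp only [hεdef]; field_simp
    obtain ⟨s₀, hs₀⟩ := eventually_atBot.mp (hlim1.eventually_lt_const hεpos)
    refine sturm_aux d₁ c r' hd₁ hr'pos hdisc ψ₁ q hC1 h01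
      (s₀ - π / (Real.sqrt (4*d₁*r' - c^2) / (2*d₁))) s₀ (by ring) ?_ hode
    intro s hs
    have h1 : ψ₁ s < ε := hs₀ s hs.2
    have h2 : r₁ * ψ₁ s < r₁ - r' := by
      calc r₁ * ψ₁ s < r₁ * ε := by exact mul_lt_mul_of_pos_left h1 hr₁
        _ = r₁ - r' := hε
    have h3 := mul_pos hr₁ (mul_pos hb₁ (h02 s))
    simp only [hqdef]
    nlinarith
end

section
/- Let b₁, b₂ > 0 with b₁b₂ < 1, let k₁ = (1+b₁)/(1−b₁b₂) and k₂ = (1+b₂)/(1−b₁b₂), and let S₁, S₂ ≥ 0. Define E₁ = max{S₁, k₁, (k₁/k₂)S₂} and E₂ = max{S₂, k₂, (k₂/k₁)S₁}. Then 1 − E₁ + b₁E₂ ≤ 0 and 1 − E₂ + b₂E₁ ≤ 0. -/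
open Real Set Filter Topology

lemma key_upper (b₁ b₂ k₁ k₂ S₁ S₂ : ℝ) (hb₁ : 0 < b₁) (hb₂ : 0 < b₂)
    (hd : 0 < 1 - b₁ * b₂)
    (hk₁ : k₁ * (1 - b₁ * b₂) = 1 + b₁) (hk₂ : k₂ * (1 - b₁ * b₂) = 1 + b₂)
    (hS₁ : 0 ≤ S₁) (hS₂ : 0 ≤ S₂) :
    1 - max (max S₁ k₁) ((k₁ / k₂) * S₂)
      + b₁ * max (max S₂ k₂) ((k₂ / k₁) * S₁) ≤ 0 := by
  have hk₁pos : 0 < k₁ := by nlinarith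
  have hk₂pos : 0 < k₂ := by nlinarith
  have hb₁k₂ : b₁ * k₂ = k₁ - 1 := by
    have h : (b₁ * k₂) * (1 - b₁ * b₂) = (k₁ - 1) * (1 - b₁ * b₂) := by ring_nf; nlinarith
    have := mul_right_cancel₀ (ne_of_gt hd) h
    linarith
  have hr : (k₁ / k₂) * k₂ = k₁ := div_mul_cancel₀ _ (ne_of_gt hk₂pos)
  have hs : (k₂ / k₁) * k₁ = k₂ := div_mul_cancel₀ _ (ne_of_gt hk₁pos)
  have hE₁k₁ : k₁ ≤ max (max S₁ k₁) ((k₁ / k₂) * S₂) := le_max_of_le_left (le_max_right _ _)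
  have hA : b₁ * S₂ ≤ max (max S₁ k₁) ((k₁ / k₂) * S₂) - 1 := by
    rcases le_total S₂ k₂ with h | h
    · nlinarith
    · have hE : (k₁ / k₂) * S₂ ≤ max (max S₁ k₁) ((k₁ / k₂) * S₂) := le_max_right _ _
      have hrb : 0 < k₁ / k₂ - b₁ := by nlinarith
      nlinarith [mul_nonneg (le_of_lt hrb) (sub_nonneg.mpr h)]
  have hB : b₁ * k₂ ≤ max (max S₁ k₁) ((k₁ / k₂) * S₂) - 1 := by nlinarith
  have hC : b₁ * ((k₂ / k₁) * S₁) ≤ max (max S₁ k₁) ((k₁ / k₂) * S₂) - 1 := by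
    rcases le_total S₁ k₁ with h | h
    · have hkk : 0 ≤ k₂ / k₁ := le_of_lt (div_pos hk₂pos hk₁pos)
      nlinarith [mul_nonneg hkk (sub_nonneg.mpr h)]
    · have hE : S₁ ≤ max (max S₁ k₁) ((k₁ / k₂) * S₂) := le_max_of_le_left (le_max_left _ _)
      have hsb : 0 < 1 - b₁ * (k₂ / k₁) := by nlinarith
      nlinarith [mul_nonneg (le_of_lt hsb) (sub_nonneg.mpr h)]
  have : b₁ * max (max S₂ k₂) ((k₂ / k₁) * S₁) ≤ max (max S₁ k₁) ((k₁ / k₂) * S₂) - 1 := by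
    rw [mul_max_of_nonneg _ _ (le_of_lt hb₁), mul_max_of_nonneg _ _ (le_of_lt hb₁)]
    exact max_le (max_le hA hB) hC
  linarith

/-- `(E₁, E₂)` is an upper solution:
`1 − E₁ + b₁E₂ ≤ 0` and `1 − E₂ + b₂E₁ ≤ 0`. -/
theorem upper_solution_inequalities
    (b₁ b₂ : ℝ) (hb₁ : 0 < b₁) (hb₂ : 0 < b₂) (hbb : b₁ * b₂ < 1)
    (S₁ S₂ : ℝ) (hS₁ : 0 ≤ S₁) (hS₂ : 0 ≤ S₂) :
    1 - max (max S₁ ((1 + b₁) / (1 - b₁ * b₂)))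
          ((((1 + b₁) / (1 - b₁ * b₂)) / ((1 + b₂) / (1 - b₁ * b₂))) * S₂)
      + b₁ * max (max S₂ ((1 + b₂) / (1 - b₁ * b₂)))
          ((((1 + b₂) / (1 - b₁ * b₂)) / ((1 + b₁) / (1 - b₁ * b₂))) * S₁) ≤ 0 ∧
    1 - max (max S₂ ((1 + b₂) / (1 - b₁ * b₂)))
          ((((1 + b₂) / (1 - b₁ * b₂)) / ((1 + b₁) / (1 - b₁ * b₂))) * S₁)
      + b₂ * max (max S₁ ((1 + b₁) / (1 - b₁ * b₂)))
          ((((1 + b₁) / (1 - b₁ * b₂)) / ((1 + b₂) / (1 - b₁ * b₂))) * S₂) ≤ 0 := by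
  have hd : 0 < 1 - b₁ * b₂ := by linarith
  have hd' : 0 < 1 - b₂ * b₁ := by nlinarith
  have hk₁ : ((1 + b₁) / (1 - b₁ * b₂)) * (1 - b₁ * b₂) = 1 + b₁ :=
    div_mul_cancel₀ _ (ne_of_gt hd)
  have hk₂ : ((1 + b₂) / (1 - b₁ * b₂)) * (1 - b₁ * b₂) = 1 + b₂ :=
    div_mul_cancel₀ _ (ne_of_gt hd)
  constructor
  · exact key_upper b₁ b₂ _ _ S₁ S₂ hb₁ hb₂ hd hk₁ hk₂ hS₁ hS₂
  · have hk₂' : ((1 + b₂) / (1 - b₁ * b₂)) * (1 - b₂ * b₁) = 1 + b₂ := by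
      rw [mul_comm b₂ b₁]; exact hk₂
    have hk₁' : ((1 + b₁) / (1 - b₁ * b₂)) * (1 - b₂ * b₁) = 1 + b₁ := by
      rw [mul_comm b₂ b₁]; exact hk₁
    exact key_upper b₂ b₁ _ _ S₂ S₁ hb₂ hb₁ hd' hk₂' hk₁' hS₂ hS₁
end

section
/- Let b₁, b₂ > 0 with b₁b₂ < 1, and set k₁ = (1+b₁)/(1−b₁b₂), k₂ = (1+b₂)/(1−b₁b₂). Let a₁, a₂, A₁, A₂ be nonnegative real numbers with a₁ ≤ A₁ and a₂ ≤ A₂, satisfying 1 − A₁ + b₁A₂ ≥ 0, 1 − a₁ + b₁a₂ ≤ 0, 1 − a₂ + b₂a₁ ≤ 0, and 1 − A₂ + b₂A₁ ≥ 0. Then a₁ = A₁ = k₁ and a₂ = A₂ = k₂. -/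
open Real Set Filter Topology

/-- The squeezing argument in the proof of Theorem 3.1: any nonnegative numbers
`a₁ ≤ A₁`, `a₂ ≤ A₂` satisfying the four inequalities must all coincide with `(k₁,k₂)`. -/
theorem squeeze_to_equilibrium
    (b₁ b₂ : ℝ) (hb₁ : 0 < b₁) (hb₂ : 0 < b₂) (hbb : b₁ * b₂ < 1)
    (a₁ a₂ A₁ A₂ : ℝ)
    (ha₁ : 0 ≤ a₁) (ha₂ : 0 ≤ a₂)
    (h₁ : a₁ ≤ A₁) (h₂ : a₂ ≤ A₂)
    (hA₁ : 0 ≤ 1 - A₁ + b₁ * A₂)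
    (ha₁' : 1 - a₁ + b₁ * a₂ ≤ 0)
    (ha₂' : 1 - a₂ + b₂ * a₁ ≤ 0)
    (hA₂ : 0 ≤ 1 - A₂ + b₂ * A₁) :
    a₁ = (1 + b₁) / (1 - b₁ * b₂) ∧ A₁ = (1 + b₁) / (1 - b₁ * b₂) ∧
    a₂ = (1 + b₂) / (1 - b₁ * b₂) ∧ A₂ = (1 + b₂) / (1 - b₁ * b₂) := by
  have hd : 0 < 1 - b₁ * b₂ := by linarith
  have e1 : A₁ = a₁ := by nlinarith [mul_le_mul_of_nonneg_left h₂ hb₁.le, mul_le_mul_of_nonneg_left h₁ hb₂.le]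
  have e2 : A₂ = a₂ := by nlinarith [mul_le_mul_of_nonneg_left h₂ hb₁.le, mul_le_mul_of_nonneg_left h₁ hb₂.le]
  subst e1 e2
  have q1 : 1 - A₁ + b₁ * A₂ = 0 := le_antisymm ha₁' hA₁
  have q2 : 1 - A₂ + b₂ * A₁ = 0 := le_antisymm ha₂' hA₂
  have r1 : A₁ = (1 + b₁) / (1 - b₁ * b₂) := by field_simp; nlinarith
  have r2 : A₂ = (1 + b₂) / (1 - b₁ * b₂) := by rw [eq_div_iff hd.ne']; nlinarith
  exact ⟨r1, r1, r2, r2⟩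
end
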